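/- arXiv:2205.11936 — 5 statements merged into one kernel-verified Lean document; each statement's English description precedes it below -/
import Mathlib

section
/- Boundary regularity at the right endpoint under an integral decay condition, strong form of Theorem 3.2(jj). Let f : (a,b) × ℝ → ℝ and let u ∈ W^{1,1}(a,b) be continuously differentiable on (a,b) with u' locally absolutely continuous on (a,b), satisfying −(u'(x)/√(1+u'(x)²))' = f(x, u(x)) for almost every x ∈ (a,b), with f(x, u(x)) ≥ 0 for almost every x ∈ (a,b). Assume there exist δ > 0 and μ ∈ L¹(b−δ, b) such that f(x, u(x)) ≤ μ(x) for almost every x ∈ (b−δ, b), M(x) := ∫ₓ^b μ(t) dt > 0 for all x ∈ [b−δ, b), and ∫_{b−δ}^b dx/√(M(x)) = +∞. Then the limit u'(b⁻) = lim_{x→b⁻} u'(x) is finite, and consequently u'' is integrable on (c, b) for every c ∈ (a,b). -/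
open Set Filter MeasureTheory Topology

noncomputable def bdryPsi (s : ℝ) : ℝ := s / Real.sqrt (1 + s ^ 2)

lemma bdryPsi_hasDerivAt (s : ℝ) :
    HasDerivAt bdryPsi (((1 + s ^ 2) * Real.sqrt (1 + s ^ 2))⁻¹) s := by
  have h1 : (0:ℝ) < 1 + s ^ 2 := by positivity
  have hq : (0:ℝ) < Real.sqrt (1 + s ^ 2) := Real.sqrt_pos.2 h1
  have hsq : HasDerivAt (fun t : ℝ => Real.sqrt (1 + t ^ 2)) (s / Real.sqrt (1 + s ^ 2)) s := by
    have h := (Real.hasDerivAt_sqrt h1.ne').comp s (((hasDerivAt_pow 2 s)).const_add 1)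
    refine h.congr_deriv ?_
    field_simp
    ring
  have hdiv : HasDerivAt (fun t : ℝ => t / Real.sqrt (1 + t ^ 2))
      ((1 * Real.sqrt (1 + s ^ 2) - s * (s / Real.sqrt (1 + s ^ 2))) / (Real.sqrt (1 + s ^ 2)) ^ 2) s :=
    (hasDerivAt_id s).div hsq hq.ne'
  have : HasDerivAt bdryPsi
      ((1 * Real.sqrt (1 + s ^ 2) - s * (s / Real.sqrt (1 + s ^ 2))) / (Real.sqrt (1 + s ^ 2)) ^ 2) s := hdiv
  convert this using 1
  have hqq : Real.sqrt (1 + s ^ 2) ^ 2 = 1 + s ^ 2 := Real.sq_sqrt h1.le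
  field_simp
  nlinarith [hqq, hq]

lemma bdryPsi_deriv_pos (s : ℝ) : 0 < ((1 + s ^ 2) * Real.sqrt (1 + s ^ 2))⁻¹ := by
  have h1 : (0:ℝ) < 1 + s ^ 2 := by positivity
  have hq : (0:ℝ) < Real.sqrt (1 + s ^ 2) := Real.sqrt_pos.2 h1
  positivity

lemma bdryPsi_strictMono : StrictMono bdryPsi :=
  strictMono_of_hasDerivAt_pos (fun s => bdryPsi_hasDerivAt s) (fun s => bdryPsi_deriv_pos s)

lemma bdryPsi_continuous : Continuous bdryPsi := by
  apply Continuous.div continuous_id (Real.continuous_sqrt.comp (by continuity))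
  intro s
  have h1 : (0:ℝ) < 1 + s ^ 2 := by positivity
  exact (Real.sqrt_pos.2 h1).ne'

lemma bdryPsi_tendsto_atBot : Tendsto bdryPsi atBot (𝓝 (-1)) := by
  have h : ∀ s : ℝ, s < 0 → bdryPsi s = -Real.sqrt (1 - (1 + s ^ 2)⁻¹) := by
    intro s hs
    have h1 : (0:ℝ) < 1 + s ^ 2 := by positivity
    have : 1 - (1 + s ^ 2)⁻¹ = s ^ 2 / (1 + s ^ 2) := by field_simp; ring
    rw [this, Real.sqrt_div (by positivity : (0:ℝ) ≤ s ^ 2), Real.sqrt_sq_eq_abs,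
      abs_of_neg hs]
    unfold bdryPsi
    field_simp
  have h2 : Tendsto (fun s : ℝ => 1 + s ^ 2) atBot atTop := by
    apply tendsto_atTop_add_const_left
    have := (tendsto_pow_atTop (two_ne_zero)).comp (tendsto_neg_atBot_atTop (G := ℝ))
    refine this.congr (fun s => by simp)
  have h3 : Tendsto (fun s : ℝ => -Real.sqrt (1 - (1 + s ^ 2)⁻¹)) atBot (𝓝 (-1)) := by
    have h4 : Tendsto (fun s : ℝ => 1 - (1 + s ^ 2)⁻¹) atBot (𝓝 1) := by
      have := h2.inv_tendsto_atTop
      have h5 := (tendsto_const_nhds (x := (1:ℝ)) (f := atBot)).sub this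
      simpa using h5
    have h6 := (Real.continuous_sqrt.tendsto 1).comp h4
    simp only [Real.sqrt_one] at h6
    exact h6.neg
  exact h3.congr' (by filter_upwards [eventually_lt_atBot (0:ℝ)] with s hs using (h s hs).symm)

lemma rpow_three_halves {z : ℝ} (hz : 0 ≤ z) : z ^ ((3:ℝ)/2) = z * Real.sqrt z := by
  rw [show (3:ℝ)/2 = (1/2) * 3 by norm_num, Real.rpow_mul hz,
    ← Real.sqrt_eq_rpow, show (3:ℝ) = ((3:ℕ) : ℝ) by norm_num, Real.rpow_natCast,
    pow_succ, Real.sq_sqrt hz]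

lemma bdryPsi_lower (s : ℝ) : ((1 + 2 * |s|)⁻¹) ^ 2 ≤ 1 + bdryPsi s := by
  have h1 : (0:ℝ) < 1 + s ^ 2 := by positivity
  set q := Real.sqrt (1 + s ^ 2) with hqdef
  have hq2 : q ^ 2 = 1 + s ^ 2 := Real.sq_sqrt h1.le
  have hqpos : 0 < q := Real.sqrt_pos.2 h1
  have habs : (0:ℝ) ≤ 2 * |s| := by positivity
  rcases le_or_gt 0 s with hs | hs
  · have hpsi : 0 ≤ bdryPsi s := div_nonneg hs hqpos.le
    have : ((1 + 2 * |s|)⁻¹) ^ 2 ≤ 1 := by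
      have h2 : (1 + 2 * |s|)⁻¹ ≤ 1 := by
        rw [inv_le_one_iff₀]; right; linarith
      have h3 : 0 ≤ (1 + 2 * |s|)⁻¹ := by positivity
      nlinarith
    linarith
  · have habs' : |s| = -s := abs_of_neg hs
    have hqle : q ≤ 1 - s := by
      rw [hqdef, show (1:ℝ) - s = Real.sqrt ((1 - s) ^ 2) by
        rw [Real.sqrt_sq (by linarith)]]
      apply Real.sqrt_le_sqrt; nlinarith
    have hqs_pos : 0 < q + s := by
      have : -s < q := by
        rw [hqdef, show -s = Real.sqrt ((-s) ^ 2) by rw [Real.sqrt_sq (by linarith)]]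
        apply Real.sqrt_lt_sqrt (by positivity); nlinarith
      linarith
    have hkey : (q + s) * (q - s) = 1 := by nlinarith
    have h1p : 1 + bdryPsi s = 1 / ((q - s) * q) := by
      unfold bdryPsi
      rw [← hqdef]
      have hqs : q - s ≠ 0 := by nlinarith
      rw [show 1 / ((q - s) * q) = 1 / (q - s) / q by field_simp]
      rw [eq_div_iff hqpos.ne', add_mul, div_mul_cancel₀ _ hqpos.ne', eq_div_iff hqs]
      linarith [hkey]
    rw [h1p, habs']
    have hmul : (q - s) * q ≤ (1 + 2 * -s) ^ 2 := by nlinarith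
    have hpos : 0 < (q - s) * q := by nlinarith
    calc ((1 + 2 * -s)⁻¹) ^ 2 = 1 / (1 + 2 * -s) ^ 2 := by
          rw [inv_pow, one_div]
      _ ≤ 1 / ((q - s) * q) := by
          apply one_div_le_one_div_of_le hpos hmul

set_option maxHeartbeats 1600000 in
/-- **Boundary regularity at the right endpoint under an integral decay condition
(Theorem 3.2(jj), strong form).** If `u ∈ W^{1,1}(a,b)` is C¹ on `(a,b)` with `u'` locally
absolutely continuous, solves `-(u'/√(1+u'²))' = f(x,u) ≥ 0` a.e. (equivalently
`-u'' = f(x,u)(1+u'²)^{3/2}` a.e.), and there are `δ > 0` and `μ ∈ L¹(b-δ,b)` with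
`f(x,u(x)) ≤ μ(x)` a.e. on `(b-δ,b)`, `M(x) = ∫_x^b μ > 0` on `[b-δ,b)`, and
`∫_{b-δ}^b dx/√(M(x)) = +∞`, then `u'(b⁻)` is finite and `u''` is integrable on `(c,b)`
for every `c ∈ (a,b)`. -/
theorem boundary_regularity_right_nonneg_curvature
    (a b : ℝ) (hab : a < b) (f : ℝ → ℝ → ℝ) (u u' u'' : ℝ → ℝ)
    -- u ∈ W^{1,1}(a,b)
    (hu_cont : ContinuousOn u (Icc a b))
    (hu'_int : IntegrableOn u' (Ioo a b))
    (hu_ftc : ∀ x ∈ Icc a b, u x = u a + ∫ t in a..x, u' t)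
    -- u is C¹ on (a,b) with u' locally absolutely continuous, a.e. derivative u''
    (hu_deriv : ∀ x ∈ Ioo a b, HasDerivAt u (u' x) x)
    (hu'_cont : ContinuousOn u' (Ioo a b))
    (hu'_locAC : ∀ c d : ℝ, a < c → c ≤ d → d < b →
      IntegrableOn u'' (Icc c d) ∧ ∀ x ∈ Icc c d, u' x = u' c + ∫ t in c..x, u'' t)
    -- the prescribed curvature equation a.e. in (a,b)
    (heq : ∀ᵐ x ∂volume, x ∈ Ioo a b →
      -u'' x = f x (u x) * (1 + u' x ^ 2) ^ ((3:ℝ)/2))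
    -- nonnegative curvature
    (hsign : ∀ᵐ x ∂volume, x ∈ Ioo a b → 0 ≤ f x (u x))
    -- integral decay condition at the right endpoint
    (hdecay : ∃ δ > (0:ℝ), a ≤ b - δ ∧ ∃ μ : ℝ → ℝ,
      IntegrableOn μ (Ioo (b - δ) b) ∧
      (∀ᵐ x ∂volume, x ∈ Ioo (b - δ) b → f x (u x) ≤ μ x) ∧
      (∀ x ∈ Ico (b - δ) b, 0 < ∫ t in x..b, μ t) ∧
      ¬ IntegrableOn (fun x => 1 / Real.sqrt (∫ t in x..b, μ t)) (Ioo (b - δ) b)) :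
    (∃ L : ℝ, Tendsto u' (𝓝[<] b) (𝓝 L)) ∧
    ∀ c ∈ Ioo a b, IntegrableOn u'' (Ioo c b) := by
  obtain ⟨δ, hδpos, haδ, μ, hμ_int, hμ_ge, hM_pos, hM_div⟩ := hdecay
  -- a.e. nonpositivity of u''
  have hu''_nonpos : ∀ᵐ t ∂volume, t ∈ Ioo a b → u'' t ≤ 0 := by
    filter_upwards [heq, hsign] with t h1 h2 ht
    have e := h1 ht
    have s := h2 ht
    nlinarith [Real.rpow_nonneg (show (0:ℝ) ≤ 1 + u' t ^ 2 by positivity) ((3:ℝ)/2)]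
  -- u' is antitone on (a,b)
  have hanti : AntitoneOn u' (Ioo a b) := by
    intro s hs t ht hst
    obtain ⟨hint, hftc⟩ := hu'_locAC s t hs.1 hst ht.2
    have h1 : u' t = u' s + ∫ r in s..t, u'' r := hftc t ⟨hst, le_rfl⟩
    have h2 : 0 ≤ ∫ r in s..t, -u'' r := by
      apply intervalIntegral.integral_nonneg_of_ae_restrict hst
      filter_upwards [ae_restrict_of_ae hu''_nonpos, ae_restrict_mem measurableSet_Icc]
        with r hr hrmem
      have hrm : r ∈ Ioo a b := ⟨lt_of_lt_of_le hs.1 hrmem.1, lt_of_le_of_lt hrmem.2 ht.2⟩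
      simp only [Pi.zero_apply]
      linarith [hr hrm]
    rw [intervalIntegral.integral_neg] at h2
    linarith
  -- μ is a.e. nonnegative near b
  have hμ_nonneg : ∀ᵐ t ∂volume, t ∈ Ioo (b - δ) b → 0 ≤ μ t := by
    filter_upwards [hsign, hμ_ge] with t h1 h2 ht
    have ht' : t ∈ Ioo a b := ⟨lt_of_le_of_lt haδ ht.1, ht.2⟩
    exact le_trans (h1 ht') (h2 ht)
  -- interval integrability of μ
  have hμ_ii : ∀ x y : ℝ, b - δ < x → x ≤ y → y ≤ b → IntervalIntegrable μ volume x y := by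
    intro x y hx hxy hyb
    rw [intervalIntegrable_iff_integrableOn_Ioc_of_le hxy,
      integrableOn_Ioc_iff_integrableOn_Ioo]
    exact hμ_int.mono_set (fun r hr => ⟨hx.trans hr.1, lt_of_lt_of_le hr.2 hyb⟩)
  -- the key inequality
  have key : ∀ x y : ℝ, b - δ < x → x ≤ y → y < b →
      bdryPsi (u' x) - bdryPsi (u' y) ≤ 9 * ∫ t in x..y, μ t := by
    intro x y hbx hxy hyb
    have hax : a < x := lt_of_le_of_lt haδ hbx
    have hmem : ∀ t : ℝ, x ≤ t → t ≤ y → t ∈ Ioo a b :=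
      fun t h1 h2 => ⟨lt_of_lt_of_le hax h1, lt_of_le_of_lt h2 hyb⟩
    -- the piece inequality
    have piece : ∀ t t' : ℝ, x ≤ t → t ≤ t' → t' ≤ y → u' t - u' t' ≤ 1 →
        bdryPsi (u' t) - bdryPsi (u' t') ≤ 9 * ∫ r in t..t', μ r := by
      intro t t' hxt htt' ht'y hosc
      have htm : t ∈ Ioo a b := hmem t hxt (htt'.trans ht'y)
      have ht'm : t' ∈ Ioo a b := hmem t' (hxt.trans htt') ht'y
      obtain ⟨hu''_int, hftc⟩ := hu'_locAC t t' htm.1 htt' ht'm.2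
      have hBA : u' t' ≤ u' t := hanti htm ht'm htt'
      have hbt : b - δ < t := lt_of_lt_of_le hbx hxt
      have ht'b : t' ≤ b := (lt_of_le_of_lt ht'y hyb).le
      have hμii : IntervalIntegrable μ volume t t' := hμ_ii t t' hbt htt' ht'b
      have hμnn : 0 ≤ ∫ r in t..t', μ r := by
        apply intervalIntegral.integral_nonneg_of_ae_restrict htt'
        filter_upwards [ae_restrict_of_ae hμ_nonneg, ae_restrict_mem measurableSet_Icc]
          with r h1 h2
        exact h1 ⟨lt_of_lt_of_le hbt h2.1, lt_of_le_of_lt h2.2 (lt_of_le_of_lt ht'y hyb)⟩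
      rcases eq_or_lt_of_le hBA with hEq | hlt
      · rw [← hEq]
        simp only [sub_self]
        linarith
      · obtain ⟨ξ, hξ, hslope⟩ := exists_hasDerivAt_eq_slope bdryPsi
          (fun s => ((1 + s ^ 2) * Real.sqrt (1 + s ^ 2))⁻¹) hlt
          bdryPsi_continuous.continuousOn (fun s _ => bdryPsi_hasDerivAt s)
        set m : ℝ := |ξ| + 1 with hm
        set C : ℝ := (1 + m ^ 2) * Real.sqrt (1 + m ^ 2) with hC
        have hdiff_pos : 0 < u' t - u' t' := sub_pos.2 hlt
        have hABint : u' t - u' t' = ∫ r in t..t', -u'' r := by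
          have h2 := hftc t' ⟨htt', le_rfl⟩
          rw [intervalIntegral.integral_neg]
          linarith
        -- bound the integral
        have hbound : (∫ r in t..t', -u'' r) ≤ C * ∫ r in t..t', μ r := by
          rw [← intervalIntegral.integral_const_mul]
          apply intervalIntegral.integral_mono_ae_restrict htt'
          · exact (intervalIntegrable_iff_integrableOn_Ioc_of_le htt').2
              ((hu''_int.mono_set Ioc_subset_Icc_self).neg)
          · exact hμii.const_mul C
          · filter_upwards [ae_restrict_of_ae heq, ae_restrict_of_ae hsign,
              ae_restrict_of_ae hμ_ge, ae_restrict_mem measurableSet_Icc]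
              with r h1 h2 h3 h4
            have hrm : r ∈ Ioo a b := ⟨lt_of_lt_of_le htm.1 h4.1, lt_of_le_of_lt h4.2 ht'm.2⟩
            have hrw : r ∈ Ioo (b - δ) b := ⟨lt_of_lt_of_le hbt h4.1, hrm.2⟩
            have hurlo : u' t' ≤ u' r := hanti hrm ht'm h4.2
            have hurhi : u' r ≤ u' t := hanti htm hrm h4.1
            have habs : |u' r| ≤ m := by
              obtain ⟨hξ1, hξ2⟩ := hξ
              have hd1 : |u' r - ξ| ≤ 1 := abs_le.2 ⟨by linarith, by linarith⟩
              calc |u' r| = |ξ + (u' r - ξ)| := by ring_nf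
                _ ≤ |ξ| + |u' r - ξ| := abs_add_le _ _
                _ ≤ m := by rw [hm]; linarith
            have hsq : u' r ^ 2 ≤ m ^ 2 := by
              have h5 := abs_le.1 habs
              nlinarith [abs_nonneg (u' r), sq_abs (u' r)]
            have hCb : (1 + u' r ^ 2) ^ ((3:ℝ)/2) ≤ C := by
              rw [rpow_three_halves (by positivity)]
              have h6 : 1 + u' r ^ 2 ≤ 1 + m ^ 2 := by linarith
              have h7 : Real.sqrt (1 + u' r ^ 2) ≤ Real.sqrt (1 + m ^ 2) :=
                Real.sqrt_le_sqrt h6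
              have h8 : (0:ℝ) ≤ Real.sqrt (1 + u' r ^ 2) := Real.sqrt_nonneg _
              rw [hC]
              nlinarith [Real.sqrt_nonneg (1 + m ^ 2)]
            have hfr : 0 ≤ f r (u r) := h2 hrm
            have hμr : f r (u r) ≤ μ r := h3 hrw
            calc -u'' r = f r (u r) * (1 + u' r ^ 2) ^ ((3:ℝ)/2) := h1 hrm
              _ ≤ μ r * C := by
                  apply mul_le_mul hμr hCb (Real.rpow_nonneg (by positivity) _)
                  linarith
              _ = C * μ r := mul_comm _ _
        have hψeq : bdryPsi (u' t) - bdryPsi (u' t') =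
            ((1 + ξ ^ 2) * Real.sqrt (1 + ξ ^ 2))⁻¹ * (u' t - u' t') := by
          rw [hslope, div_mul_cancel₀ _ hdiff_pos.ne']
        have hDpos := bdryPsi_deriv_pos ξ
        have hDC : ((1 + ξ ^ 2) * Real.sqrt (1 + ξ ^ 2))⁻¹ * C ≤ 9 := by
          have hqξ : 0 < Real.sqrt (1 + ξ ^ 2) := Real.sqrt_pos.2 (by positivity)
          have hpos : (0:ℝ) < (1 + ξ ^ 2) * Real.sqrt (1 + ξ ^ 2) := by positivity
          rw [inv_mul_le_iff₀ hpos]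
          have hr3 : 1 + m ^ 2 ≤ 3 * (1 + ξ ^ 2) := by
            rw [hm]
            nlinarith [sq_nonneg (|ξ| - 1), sq_abs ξ, abs_nonneg ξ]
          have h9 : Real.sqrt (1 + m ^ 2) ≤ 3 * Real.sqrt (1 + ξ ^ 2) := by
            calc Real.sqrt (1 + m ^ 2) ≤ Real.sqrt (3 * (1 + ξ ^ 2)) := Real.sqrt_le_sqrt hr3
              _ = Real.sqrt 3 * Real.sqrt (1 + ξ ^ 2) := Real.sqrt_mul (by norm_num) _
              _ ≤ 3 * Real.sqrt (1 + ξ ^ 2) := by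
                  apply mul_le_mul_of_nonneg_right _ hqξ.le
                  nlinarith [Real.sq_sqrt (show (0:ℝ) ≤ 3 by norm_num),
                    Real.sqrt_nonneg 3]
          rw [hC]
          calc (1 + m ^ 2) * Real.sqrt (1 + m ^ 2)
              ≤ (3 * (1 + ξ ^ 2)) * (3 * Real.sqrt (1 + ξ ^ 2)) :=
                mul_le_mul hr3 h9 (Real.sqrt_nonneg _) (by positivity)
            _ = (1 + ξ ^ 2) * Real.sqrt (1 + ξ ^ 2) * 9 := by ring
        calc bdryPsi (u' t) - bdryPsi (u' t')
            = ((1 + ξ ^ 2) * Real.sqrt (1 + ξ ^ 2))⁻¹ * (u' t - u' t') := hψeq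
          _ ≤ ((1 + ξ ^ 2) * Real.sqrt (1 + ξ ^ 2))⁻¹ * (C * ∫ r in t..t', μ r) := by
              apply mul_le_mul_of_nonneg_left _ hDpos.le
              rw [hABint]; exact hbound
          _ = (((1 + ξ ^ 2) * Real.sqrt (1 + ξ ^ 2))⁻¹ * C) * ∫ r in t..t', μ r := by ring
          _ ≤ 9 * ∫ r in t..t', μ r := mul_le_mul_of_nonneg_right hDC hμnn
    -- continuous induction
    have hsub : Icc x y ⊆ {t : ℝ | bdryPsi (u' x) - bdryPsi (u' t) ≤ 9 * ∫ r in x..t, μ r} := by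
      apply IsClosed.Icc_subset_of_forall_exists_gt
      · -- closedness
        have hcont1 : ContinuousOn (fun t => bdryPsi (u' t)) (Icc x y) :=
          bdryPsi_continuous.comp_continuousOn (hu'_cont.mono (fun r hr => hmem r hr.1 hr.2))
        have hcont2 : ContinuousOn (fun t => ∫ r in x..t, μ r) (Icc x y) := by
          have h := intervalIntegral.continuousOn_primitive_interval'
            (hμ_ii x y hbx hxy hyb.le) (left_mem_uIcc)
          rwa [uIcc_of_le hxy] at h
        have hset : {t : ℝ | bdryPsi (u' x) - bdryPsi (u' t) ≤ 9 * ∫ r in x..t, μ r} ∩ Icc x y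
            = Icc x y ∩ (fun t => 9 * (∫ r in x..t, μ r) -
              (bdryPsi (u' x) - bdryPsi (u' t))) ⁻¹' (Ici 0) := by
          ext t
          simp only [mem_inter_iff, mem_setOf_eq, mem_preimage, mem_Ici]
          constructor
          · rintro ⟨h1, h2⟩; exact ⟨h2, by linarith⟩
          · rintro ⟨h1, h2⟩; exact ⟨by linarith, h1⟩
        rw [hset]
        exact ContinuousOn.preimage_isClosed_of_isClosed
          ((continuousOn_const.mul hcont2).sub (continuousOn_const.sub hcont1))
          isClosed_Icc isClosed_Ici
      · -- x belongs
        simp only [mem_setOf_eq, intervalIntegral.integral_same, sub_self, mul_zero, le_refl]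
      · -- step
        rintro t ⟨htS, htIco⟩ z hz
        have htIoo : t ∈ Ioo a b := hmem t htIco.1 htIco.2.le
        have hcontAt : ContinuousAt u' t :=
          hu'_cont.continuousAt (Ioo_mem_nhds htIoo.1 htIoo.2)
        have hev1 : ∀ᶠ s in 𝓝[>] t, u' t - 1 < u' s :=
          (hcontAt.eventually (eventually_gt_nhds (show u' t - 1 < u' t by linarith))).filter_mono
            nhdsWithin_le_nhds
        have hmin : t < min z y := lt_min hz htIco.2
        have hev2 : ∀ᶠ s in 𝓝[>] t, s ∈ Ioc t (min z y) :=
          eventually_of_mem (Ioc_mem_nhdsGT hmin) (fun s hs => hs)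
        obtain ⟨t', ht'1, ht'2⟩ := (hev1.and hev2).exists
        have ht'y : t' ≤ y := le_trans ht'2.2 (min_le_right z y)
        have hpiece := piece t t' htIco.1 ht'2.1.le ht'y (by linarith [ht'1])
        have hadd : (∫ r in x..t, μ r) + (∫ r in t..t', μ r) = ∫ r in x..t', μ r :=
          intervalIntegral.integral_add_adjacent_intervals
            (hμ_ii x t hbx htIco.1 (le_trans htIco.2.le hyb.le))
            (hμ_ii t t' (lt_of_lt_of_le hbx htIco.1) ht'2.1.le (le_trans ht'y hyb.le))
        refine ⟨t', ?_, ht'2.1, le_trans ht'2.2 (min_le_left z y)⟩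
        simp only [mem_setOf_eq] at htS ⊢
        linarith
    have := hsub (right_mem_Icc.2 hxy)
    simpa using this
  -- Part 1: the limit exists
  have h1 : ∃ L : ℝ, Tendsto u' (𝓝[<] b) (𝓝 L) := by
    by_cases hbdd : BddBelow (u' '' Ioo a b)
    · have hne : ((a + b) / 2) ∈ Ioo a b := ⟨by linarith, by linarith⟩
      have hImne : (u' '' Ioo a b).Nonempty := ⟨u' ((a + b) / 2), mem_image_of_mem _ hne⟩
      refine ⟨sInf (u' '' Ioo a b), ?_⟩
      rw [tendsto_order]
      constructor
      · intro l hl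
        filter_upwards [Ioo_mem_nhdsLT hab] with t ht
        exact lt_of_lt_of_le hl (csInf_le hbdd (mem_image_of_mem _ ht))
      · intro c hc
        obtain ⟨z, hz, hzc⟩ := exists_lt_of_csInf_lt hImne hc
        obtain ⟨yy, hyy, rfl⟩ := hz
        filter_upwards [Ioo_mem_nhdsLT hyy.2] with t ht
        exact lt_of_le_of_lt (hanti hyy ⟨hyy.1.trans ht.1, ht.2⟩ ht.1.le) hzc
    · exfalso
      have hbδ : b - δ < b := by linarith
      have hM_cont : ContinuousOn (fun x => ∫ t in x..b, μ t) (Icc (b - δ) b) := by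
        have hint : IntegrableOn μ (uIcc (b - δ) b) := by
          rw [uIcc_of_le hbδ.le, integrableOn_Icc_iff_integrableOn_Ioo]
          exact hμ_int
        have h := intervalIntegral.continuousOn_primitive_interval_left hint
        rwa [uIcc_of_le hbδ.le] at h
      have hne_b : ∀ᵐ r ∂(volume : Measure ℝ), r ≠ b := by
        rw [ae_iff]
        simp only [ne_eq, not_not]
        simpa using measure_singleton b
      have hkey2 : ∀ x ∈ Ioo (b - δ) b,
          1 / Real.sqrt (∫ t in x..b, μ t) ≤ 3 * (1 + 2 * |u' x|) := by
        intro x hx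
        have hMx := hM_pos x ⟨hx.1.le, hx.2⟩
        have hxIoo : x ∈ Ioo a b := ⟨lt_of_le_of_lt haδ hx.1, hx.2⟩
        -- Step A
        have hK : ∀ K : ℝ, bdryPsi (u' x) ≤ bdryPsi K + 9 * ∫ t in x..b, μ t := by
          intro K
          obtain ⟨z, hzim, hzK⟩ := not_bddBelow_iff.1 hbdd K
          obtain ⟨yy, hyyIoo, rfl⟩ := hzim
          set y' := max yy ((x + b) / 2) with hy'
          have hy'Ioo : y' ∈ Ioo a b :=
            ⟨lt_of_lt_of_le hyyIoo.1 (le_max_left _ _),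
             max_lt hyyIoo.2 (by cases hx with | intro h1 h2 => linarith)⟩
          have hxy' : x ≤ y' := le_trans
            (by cases hx with | intro h1 h2 => linarith) (le_max_right _ _)
          have hky := key x y' hx.1 hxy' hy'Ioo.2
          have hu'y' : u' y' ≤ K :=
            le_of_lt (lt_of_le_of_lt (hanti hyyIoo hy'Ioo (le_max_left _ _)) hzK)
          have hmono := bdryPsi_strictMono.monotone hu'y'
          have hsplit : (∫ t in x..y', μ t) + (∫ t in y'..b, μ t) = ∫ t in x..b, μ t :=
            intervalIntegral.integral_add_adjacent_intervals
              (hμ_ii x y' hx.1 hxy' hy'Ioo.2.le)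
              (hμ_ii y' b (lt_of_lt_of_le hx.1 hxy') hy'Ioo.2.le le_rfl)
          have htail : 0 ≤ ∫ t in y'..b, μ t := by
            apply intervalIntegral.integral_nonneg_of_ae_restrict hy'Ioo.2.le
            filter_upwards [ae_restrict_of_ae hμ_nonneg, ae_restrict_of_ae hne_b,
              ae_restrict_mem measurableSet_Icc] with r hr1 hr2 hr3
            exact hr1 ⟨lt_of_lt_of_le (lt_of_lt_of_le hx.1 hxy') hr3.1,
              lt_of_le_of_ne hr3.2 hr2⟩
          linarith
        have hlim : Tendsto (fun K : ℝ => bdryPsi K + 9 * ∫ t in x..b, μ t) atBot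
            (𝓝 (-1 + 9 * ∫ t in x..b, μ t)) := bdryPsi_tendsto_atBot.add_const _
        have hA : bdryPsi (u' x) ≤ -1 + 9 * ∫ t in x..b, μ t :=
          ge_of_tendsto hlim (Eventually.of_forall hK)
        -- Step B
        have hB := bdryPsi_lower (u' x)
        set W : ℝ := 1 + 2 * |u' x| with hW
        have hWpos : 0 < W := by rw [hW]; positivity
        have h6 : (W⁻¹ / 3) ^ 2 ≤ ∫ t in x..b, μ t := by
          have : (W⁻¹) ^ 2 ≤ 9 * ∫ t in x..b, μ t := by
            rw [hW]; nlinarith [hB, hA]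
          nlinarith [this]
        have h7 : W⁻¹ / 3 ≤ Real.sqrt (∫ t in x..b, μ t) := by
          have h8 := Real.sqrt_le_sqrt h6
          rwa [Real.sqrt_sq (by positivity : (0:ℝ) ≤ W⁻¹ / 3)] at h8
        have h9 : (Real.sqrt (∫ t in x..b, μ t))⁻¹ ≤ (W⁻¹ / 3)⁻¹ :=
          inv_anti₀ (by positivity) h7
        have h10 : (W⁻¹ / 3)⁻¹ = 3 * W := by
          rw [inv_div, div_eq_mul_inv, inv_inv]
        rw [one_div]
        rw [h10] at h9
        rw [hW] at h9
        exact h9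
      apply hM_div
      have hg_int : IntegrableOn (fun x => 3 * (1 + 2 * |u' x|)) (Ioo (b - δ) b) := by
        have h11 : IntegrableOn u' (Ioo (b - δ) b) :=
          hu'_int.mono_set (fun r hr => ⟨lt_of_le_of_lt haδ hr.1, hr.2⟩)
        have hconst : IntegrableOn (fun _ : ℝ => (1:ℝ)) (Ioo (b - δ) b) :=
          integrableOn_const measure_Ioo_lt_top.ne
        have h12 := (hconst.add (h11.abs.const_mul 2)).const_mul 3
        simpa [IntegrableOn] using h12
      apply Integrable.mono' hg_int
      · have hc : ContinuousOn (fun x => 1 / Real.sqrt (∫ t in x..b, μ t)) (Ico (b - δ) b) := by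
          apply ContinuousOn.div continuousOn_const
          · exact Real.continuous_sqrt.comp_continuousOn (hM_cont.mono Ico_subset_Icc_self)
          · intro r hr
            exact (Real.sqrt_pos.2 (hM_pos r hr)).ne'
        exact (hc.aestronglyMeasurable measurableSet_Ico).mono_measure
          (Measure.restrict_mono Ioo_subset_Ico_self le_rfl)
      · filter_upwards [ae_restrict_mem measurableSet_Ioo] with r hr
        have h12 := hkey2 r hr
        rw [Real.norm_eq_abs, abs_of_nonneg (by positivity)]
        exact h12
  obtain ⟨L, hL⟩ := h1
  refine ⟨⟨L, hL⟩, ?_⟩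
  -- Part 2: integrability of u''
  intro c hc
  have hLle : ∀ t ∈ Ioo a b, L ≤ u' t := by
    intro t ht
    apply le_of_tendsto hL
    filter_upwards [Ioo_mem_nhdsLT ht.2] with s hs
    exact hanti ht ⟨ht.1.trans hs.1, hs.2⟩ hs.1.le
  set d : ℕ → ℝ := fun n => b - (b - c) / (n + 1) with hd
  have hbc : 0 < b - c := by linarith [hc.2]
  have hdmem : ∀ n : ℕ, c ≤ d n ∧ d n < b := by
    intro n
    have h0 : (0:ℝ) < (n:ℝ) + 1 := by positivity
    constructor
    · have h13 : (b - c) / ((n:ℝ) + 1) ≤ b - c :=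
        div_le_self hbc.le (by linarith [Nat.cast_nonneg (α := ℝ) n])
      rw [hd]
      simp only
      linarith
    · rw [hd]
      simp only
      have : 0 < (b - c) / ((n:ℝ) + 1) := div_pos hbc h0
      linarith
  have hdtend : Tendsto d atTop (𝓝 b) := by
    rw [hd]
    have h14 : Tendsto (fun n : ℕ => (b - c) / ((n:ℝ) + 1)) atTop (𝓝 0) := by
      apply Tendsto.div_atTop tendsto_const_nhds
      exact tendsto_atTop_add_const_right atTop 1 tendsto_natCast_atTop_atTop
    have h15 := tendsto_const_nhds (x := b) (f := (atTop : Filter ℕ)) |>.sub h14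
    simpa using h15
  have hIoc : IntegrableOn u'' (Ioc c b) := by
    apply MeasureTheory.integrableOn_Ioc_of_intervalIntegral_norm_bounded_right
      (I := u' c - L) (b := d) ?_ hdtend ?_
    · intro n
      exact ((hu'_locAC c (d n) hc.1 (hdmem n).1 (hdmem n).2).1).mono_set Ioc_subset_Icc_self
    · apply Eventually.of_forall
      intro n
      obtain ⟨hint, hftc⟩ := hu'_locAC c (d n) hc.1 (hdmem n).1 (hdmem n).2
      have heqn : ∫ r in Ioc c (d n), ‖u'' r‖ = ∫ r in Ioc c (d n), (-u'' r) := by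
        apply setIntegral_congr_ae measurableSet_Ioc
        filter_upwards [hu''_nonpos] with r hr hrm
        have hrIoo : r ∈ Ioo a b := ⟨hc.1.trans hrm.1,
          lt_of_le_of_lt hrm.2 (hdmem n).2⟩
        rw [Real.norm_eq_abs, abs_of_nonpos (hr hrIoo)]
      rw [heqn]
      have h16 : ∫ r in Ioc c (d n), (-u'' r) = ∫ r in c..(d n), (-u'' r) :=
        (intervalIntegral.integral_of_le (hdmem n).1).symm
      have h17 : u' (d n) = u' c + ∫ r in c..(d n), u'' r := hftc (d n) ⟨(hdmem n).1, le_rfl⟩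
      rw [h16, intervalIntegral.integral_neg]
      have h18 := hLle (d n) ⟨lt_of_lt_of_le hc.1 (hdmem n).1, (hdmem n).2⟩
      linarith
  exact hIoc.mono_set Ioo_subset_Ioc_self
end

section
/- Boundary regularity at the left endpoint in the nonpositive-curvature case, strong form of Theorem 3.2(jjj). Let f : (a,b) × ℝ → ℝ and let u ∈ W^{1,1}(a,b) be continuously differentiable on (a,b) with u' locally absolutely continuous on (a,b), satisfying −(u'(x)/√(1+u'(x)²))' = f(x, u(x)) for almost every x ∈ (a,b), with f(x, u(x)) ≤ 0 for almost every x ∈ (a,b). Assume there exist δ > 0 and ν ∈ L¹(a, a+δ) such that f(x, u(x)) ≥ ν(x) for almost every x ∈ (a, a+δ), N(x) := ∫ₐ^x ν(t) dt < 0 for all x ∈ (a, a+δ], and ∫ₐ^{a+δ} dx/√(−N(x)) = +∞. Then the limit u'(a⁺) = lim_{x→a⁺} u'(x) is finite, and consequently u'' is integrable on (a, c) for every c ∈ (a,b). -/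
open Set Filter MeasureTheory Topology

private lemma aux_rpow_le (M : ℝ) (hM : 1 ≤ M) : (1 + M ^ 2) ^ ((3:ℝ)/2) ≤ 3 * M ^ 3 := by
  have h0 : (0:ℝ) ≤ 1 + M ^ 2 := by positivity
  have hX0 : (0:ℝ) ≤ (1 + M ^ 2) ^ ((3:ℝ)/2) := Real.rpow_nonneg h0 _
  have hXsq : ((1 + M ^ 2) ^ ((3:ℝ)/2)) ^ (2:ℕ) = (1 + M ^ 2) ^ (3:ℕ) := by
    rw [← Real.rpow_natCast ((1 + M ^ 2) ^ ((3:ℝ)/2)) 2, ← Real.rpow_mul h0,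
      ← Real.rpow_natCast (1 + M ^ 2) 3]
    norm_num
  nlinarith [hXsq, hX0, hM, sq_nonneg (M - 1), sq_nonneg (M ^ 2 - 1), sq_nonneg (M ^ 3 - 1),
    sq_nonneg ((1 + M ^ 2) ^ ((3:ℝ)/2) - 3 * M ^ 3)]

private lemma aux_calc (s : ℝ) (hs : 0 < s) :
    -(1/(3*Real.sqrt s)) + 3*(1/(3*Real.sqrt s))^3 * s ≤ -(1/5)/Real.sqrt s := by
  set r := Real.sqrt s with hrdef
  have hr : 0 < r := Real.sqrt_pos.mpr hs
  have hss : r ^ 2 = s := Real.sq_sqrt hs.le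
  have key : -(1/(3*r)) + 3*(1/(3*r))^3 * s = -(2/9)/r := by
    rw [← hss]
    field_simp
    ring
  rw [key]
  rw [div_le_div_iff₀ hr hr]
  nlinarith [hr]

set_option maxHeartbeats 1600000 in
/-- **Boundary regularity at the left endpoint under an integral decay condition
(Theorem 3.2(jjj), strong form; nonpositive curvature).** If `u ∈ W^{1,1}(a,b)` is C¹ on `(a,b)` with `u'` locally
absolutely continuous, solves `-(u'/√(1+u'²))' = f(x,u) ≤ 0` a.e. (equivalently
`-u'' = f(x,u)(1+u'²)^{3/2}` a.e.), and there are `δ > 0` and `ν ∈ L¹(a,a+δ)` with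
`f(x,u(x)) ≥ ν(x)` a.e. on `(a,a+δ)`, `N(x) = ∫_a^x ν < 0` on `(a,a+δ]`, and
`∫_a^{a+δ} dx/√(-N(x)) = +∞`, then `u'(a⁺)` is finite and `u''` is integrable on `(a,c)`
for every `c ∈ (a,b)`. -/
theorem boundary_regularity_left_nonpos_curvature
    (a b : ℝ) (hab : a < b) (f : ℝ → ℝ → ℝ) (u u' u'' : ℝ → ℝ)
    -- u ∈ W^{1,1}(a,b)
    (hu_cont : ContinuousOn u (Icc a b))
    (hu'_int : IntegrableOn u' (Ioo a b))
    (hu_ftc : ∀ x ∈ Icc a b, u x = u a + ∫ t in a..x, u' t)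
    -- u is C¹ on (a,b) with u' locally absolutely continuous, a.e. derivative u''
    (hu_deriv : ∀ x ∈ Ioo a b, HasDerivAt u (u' x) x)
    (hu'_cont : ContinuousOn u' (Ioo a b))
    (hu'_locAC : ∀ c d : ℝ, a < c → c ≤ d → d < b →
      IntegrableOn u'' (Icc c d) ∧ ∀ x ∈ Icc c d, u' x = u' c + ∫ t in c..x, u'' t)
    -- the prescribed curvature equation a.e. in (a,b)
    (heq : ∀ᵐ x ∂volume, x ∈ Ioo a b →
      -u'' x = f x (u x) * (1 + u' x ^ 2) ^ ((3:ℝ)/2))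
    -- nonpositive curvature
    (hsign : ∀ᵐ x ∂volume, x ∈ Ioo a b → f x (u x) ≤ 0)
    -- integral decay condition at the left endpoint
    (hdecay : ∃ δ > (0:ℝ), a + δ ≤ b ∧ ∃ ν : ℝ → ℝ,
      IntegrableOn ν (Ioo a (a + δ)) ∧
      (∀ᵐ x ∂volume, x ∈ Ioo a (a + δ) → ν x ≤ f x (u x)) ∧
      (∀ x ∈ Ioc a (a + δ), (∫ t in a..x, ν t) < 0) ∧
      ¬ IntegrableOn (fun x => 1 / Real.sqrt (-(∫ t in a..x, ν t))) (Ioo a (a + δ))) :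
    (∃ L : ℝ, Tendsto u' (𝓝[>] a) (𝓝 L)) ∧
    ∀ c ∈ Ioo a b, IntegrableOn u'' (Ioo a c) := by
  obtain ⟨δ, hδ, hdb, ν, hνint, hνle, hNneg, hNnotint⟩ := hdecay
  set d := a + δ with hd
  have had : a < d := by rw [hd]; linarith
  -- basic integrability of ν
  have hνIcc : IntegrableOn ν (Icc a d) := by
    rwa [integrableOn_Icc_iff_integrableOn_Ioo]
  -- u'' ≥ 0 a.e. on (a,b)
  have hu''_nonneg : ∀ᵐ x ∂volume, x ∈ Ioo a b → 0 ≤ u'' x := by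
    filter_upwards [heq, hsign] with x hx1 hx2 hx
    have hP : (0:ℝ) < (1 + u' x ^ 2) ^ ((3:ℝ)/2) :=
      Real.rpow_pos_of_pos (by positivity) _
    have hfP : f x (u x) * (1 + u' x ^ 2) ^ ((3:ℝ)/2) ≤ 0 :=
      mul_nonpos_of_nonpos_of_nonneg (hx2 hx) hP.le
    linarith [hx1 hx]
  -- FTC for u' and integrability of u''
  have hInt : ∀ ⦃x y : ℝ⦄, a < x → x ≤ y → y < b →
      u' y = u' x + ∫ t in x..y, u'' t := fun x y hx hxy hy =>
    (hu'_locAC x y hx hxy hy).2 y (right_mem_Icc.mpr hxy)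
  have hu''IccInt : ∀ ⦃x y : ℝ⦄, a < x → x ≤ y → y < b → IntegrableOn u'' (Icc x y) :=
    fun x y hx hxy hy => (hu'_locAC x y hx hxy hy).1
  -- u' is monotone on (a,b)
  have hmono : MonotoneOn u' (Ioo a b) := by
    intro x hx y hy hxy
    have h1 := hInt hx.1 hxy hy.2
    have h2 : 0 ≤ ∫ t in x..y, u'' t := by
      rw [intervalIntegral.integral_of_le hxy]
      refine setIntegral_nonneg_of_ae_restrict ?_
      have h3 : ∀ᵐ t ∂(volume.restrict (Ioc x y)), 0 ≤ u'' t := by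
        rw [ae_restrict_iff' measurableSet_Ioc]
        filter_upwards [hu''_nonneg] with t ht htm
        exact ht ⟨hx.1.trans htm.1, lt_of_le_of_lt htm.2 hy.2⟩
      exact h3
    linarith
  -- midpoint
  set m0 := a + δ/2 with hm0
  have ham0 : a < m0 := by rw [hm0]; linarith
  have hm0d : m0 < d := by rw [hm0, hd]; linarith
  have hm0b : m0 < b := lt_of_lt_of_le hm0d hdb
  -- Main claim: u' is bounded below on (a, m0)
  have hB : ∃ B : ℝ, ∀ x ∈ Ioo a m0, B ≤ u' x := by
    by_contra hK
    push_neg at hK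
    obtain ⟨x₁, hx₁m, hx₁u⟩ := hK (-1)
    have hx₁b : x₁ < b := hx₁m.2.trans hm0b
    -- choose x₂ where -N is small
    have hNcont : ContinuousOn (fun x => ∫ t in a..x, ν t) (Icc a d) :=
      (intervalIntegral.continuousOn_primitive hνIcc).congr
        (fun x hx => intervalIntegral.integral_of_le hx.1)
    have htendN : Tendsto (fun x => ∫ t in a..x, ν t) (𝓝[Icc a d] a) (𝓝 0) := by
      have h := hNcont a ⟨le_rfl, had.le⟩
      rw [ContinuousWithinAt] at h
      simpa using h
    have hev : ∀ᶠ z in 𝓝[Icc a d] a, |∫ t in a..z, ν t| < 1/9 := by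
      have h := Metric.tendsto_nhds.mp htendN (1/9) (by norm_num)
      simpa [Real.dist_eq] using h
    rw [eventually_nhdsWithin_iff, Metric.eventually_nhds_iff] at hev
    obtain ⟨ε, hε, hεh⟩ := hev
    set x₂ := min x₁ (a + ε/2) with hx₂def
    have hax₂ : a < x₂ := lt_min hx₁m.1 (by linarith)
    have hx₂x₁ : x₂ ≤ x₁ := min_le_left _ _
    have hx₂d : x₂ < d := lt_of_le_of_lt hx₂x₁ (hx₁m.2.trans hm0d)
    have hsmall : ∀ x ∈ Ioo a x₂, -(∫ t in a..x, ν t) < 1/9 := by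
      intro x hx
      have h1 : dist x a < ε := by
        rw [Real.dist_eq, abs_of_pos (by linarith [hx.1] : (0:ℝ) < x - a)]
        have : x < a + ε/2 := lt_of_lt_of_le hx.2 (min_le_right _ _)
        linarith
      have h2 : x ∈ Icc a d := ⟨hx.1.le, (hx.2.trans_le hx₂d.le).le⟩
      have h3 := hεh h1 h2
      calc -(∫ t in a..x, ν t) ≤ |∫ t in a..x, ν t| := neg_le_abs _
        _ < 1/9 := h3
    -- the key comparison inequality
    have hstar : ∀ x ∈ Ioo a x₂, ∀ y ∈ Ioo a x,
        u' x ≤ u' y + (1 + u' y ^ 2) ^ ((3:ℝ)/2) * (-(∫ t in a..x, ν t)) := by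
      intro x hx y hy
      have hxb : x < b := (hx.2.trans_le hx₂x₁).trans hx₁b
      have hxd : x < d := hx.2.trans hx₂d
      have hux : u' x < -1 := by
        have h := hmono ⟨hx.1, hxb⟩ ⟨hx₁m.1, hx₁b⟩ (hx.2.trans_le hx₂x₁).le
        linarith
      have hftc := hInt hy.1 hy.2.le hxb
      have hIu : IntegrableOn u'' (Ioc y x) :=
        (hu''IccInt hy.1 hy.2.le hxb).mono Ioc_subset_Icc_self le_rfl
      have hνsub : IntegrableOn ν (Ioc y x) :=
        hνIcc.mono (fun t ht => ⟨(hy.1.trans ht.1).le, ht.2.trans hxd.le⟩) le_rfl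
      have hIg : IntegrableOn (fun t => (-ν t) * (1 + u' y ^ 2) ^ ((3:ℝ)/2)) (Ioc y x) :=
        hνsub.neg.mul_const _
      have hle : ∫ t in Ioc y x, u'' t ≤
          ∫ t in Ioc y x, (-ν t) * (1 + u' y ^ 2) ^ ((3:ℝ)/2) := by
        refine setIntegral_mono_ae_restrict hIu hIg ?_
        have hres : ∀ᵐ t ∂(volume.restrict (Ioc y x)),
            u'' t ≤ (-ν t) * (1 + u' y ^ 2) ^ ((3:ℝ)/2) := by
          rw [ae_restrict_iff' measurableSet_Ioc]
          filter_upwards [heq, hsign, hνle] with t h1 h2 h3 ht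
          have htb : t ∈ Ioo a b := ⟨hy.1.trans ht.1, lt_of_le_of_lt ht.2 hxb⟩
          have htd : t ∈ Ioo a d := ⟨hy.1.trans ht.1, lt_of_le_of_lt ht.2 hxd⟩
          have hP : (0:ℝ) < (1 + u' t ^ 2) ^ ((3:ℝ)/2) :=
            Real.rpow_pos_of_pos (by positivity) _
          have h1' := h1 htb
          have h2' := h2 htb
          have h3' := h3 htd
          have huyt : u' y ≤ u' t := hmono ⟨hy.1, hy.2.trans hxb⟩ htb ht.1.le
          have hutx : u' t ≤ u' x := hmono htb ⟨hx.1, hxb⟩ ht.2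
          have hsq : u' t ^ 2 ≤ u' y ^ 2 := by nlinarith
          have hPle : (1 + u' t ^ 2) ^ ((3:ℝ)/2) ≤ (1 + u' y ^ 2) ^ ((3:ℝ)/2) :=
            Real.rpow_le_rpow (by positivity) (by linarith) (by norm_num)
          have hν0 : 0 ≤ -ν t := by linarith
          calc u'' t = (-f t (u t)) * (1 + u' t ^ 2) ^ ((3:ℝ)/2) := by linarith
            _ ≤ (-ν t) * (1 + u' t ^ 2) ^ ((3:ℝ)/2) :=
              mul_le_mul_of_nonneg_right (by linarith) hP.le
            _ ≤ (-ν t) * (1 + u' y ^ 2) ^ ((3:ℝ)/2) :=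
              mul_le_mul_of_nonneg_left hPle hν0
        exact hres
      have hiay : IntervalIntegrable ν volume a y := by
        apply IntegrableOn.intervalIntegrable
        rw [uIcc_of_le hy.1.le]
        exact hνIcc.mono (Icc_subset_Icc le_rfl (hy.2.le.trans hxd.le)) le_rfl
      have hiax : IntervalIntegrable ν volume a x := by
        apply IntegrableOn.intervalIntegrable
        rw [uIcc_of_le hx.1.le]
        exact hνIcc.mono (Icc_subset_Icc le_rfl hxd.le) le_rfl
      have hIoc_eq : ∫ t in Ioc y x, (-ν t) * (1 + u' y ^ 2) ^ ((3:ℝ)/2) =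
          (1 + u' y ^ 2) ^ ((3:ℝ)/2) * ((∫ t in a..y, ν t) - (∫ t in a..x, ν t)) := by
        rw [integral_mul_const, integral_neg]
        have hsub : (∫ t in a..x, ν t) - (∫ t in a..y, ν t) = ∫ t in y..x, ν t :=
          intervalIntegral.integral_interval_sub_left hiax hiay
        rw [← intervalIntegral.integral_of_le hy.2.le, ← hsub]
        ring
      have hNyneg : (∫ t in a..y, ν t) < 0 :=
        hNneg y ⟨hy.1, (hy.2.le.trans hxd.le)⟩
      have hC0 : (0:ℝ) ≤ (1 + u' y ^ 2) ^ ((3:ℝ)/2) := Real.rpow_nonneg (by positivity) _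
      have hfinal : ∫ t in Ioc y x, u'' t ≤
          (1 + u' y ^ 2) ^ ((3:ℝ)/2) * (-(∫ t in a..x, ν t)) := by
        refine hle.trans ?_
        rw [hIoc_eq]
        apply mul_le_mul_of_nonneg_left _ hC0
        linarith
      rw [hftc, intervalIntegral.integral_of_le hy.2.le]
      linarith [hfinal]
    -- the key pointwise lower bound forced by blow-up
    have hkey : ∀ x ∈ Ioo a x₂,
        u' x ≤ -(1/5) / Real.sqrt (-(∫ t in a..x, ν t)) := by
      intro x hx
      have hxb : x < b := (hx.2.trans_le hx₂x₁).trans hx₁b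
      have hxd : x ∈ Ioc a d := ⟨hx.1, (hx.2.trans hx₂d).le⟩
      set s := -(∫ t in a..x, ν t) with hsdef
      have hs0 : 0 < s := by
        have := hNneg x hxd
        rw [hsdef]; linarith
      have hs9 : s < 1/9 := hsmall x hx
      have hr : 0 < Real.sqrt s := Real.sqrt_pos.mpr hs0
      set M := 1/(3*Real.sqrt s) with hMdef
      have hM0 : 0 < M := by positivity
      have hrs : Real.sqrt s < 1/3 := by
        have h1 : Real.sqrt s < Real.sqrt (1/9) := Real.sqrt_lt_sqrt hs0.le hs9
        have h2 : Real.sqrt (1/9 : ℝ) = 1/3 := by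
          rw [show (1/9 : ℝ) = (1/3)^2 by norm_num, Real.sqrt_sq (by norm_num)]
        linarith
      have hM1 : 1 < M := by
        rw [hMdef, lt_div_iff₀ (by positivity)]
        linarith
      by_cases hcase : u' x ≤ -M
      · have h1 : (1/5) / Real.sqrt s ≤ M := by
          rw [hMdef, div_le_div_iff₀ hr (by positivity)]
          nlinarith
        rw [neg_div]
        linarith
      · push_neg at hcase
        obtain ⟨t₀, ht₀m, ht₀u⟩ := hK (-M)
        have ht₀b : t₀ < b := ht₀m.2.trans hm0b
        have ht₀x : t₀ < x := by
          by_contra hcon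
          push_neg at hcon
          have := hmono ⟨hx.1, hxb⟩ ⟨ht₀m.1, ht₀b⟩ hcon
          linarith
        have hucont : ContinuousOn u' (Icc t₀ x) :=
          hu'_cont.mono (fun z hz => ⟨ht₀m.1.trans_le hz.1, lt_of_le_of_lt hz.2 hxb⟩)
        obtain ⟨y, hymem, hyu⟩ := intermediate_value_Icc ht₀x.le hucont
          (show -M ∈ Icc (u' t₀) (u' x) from ⟨ht₀u.le, hcase.le⟩)
        have hyx : y < x := lt_of_le_of_ne hymem.2 (by
          intro hcon; rw [hcon] at hyu; rw [hyu] at hcase; exact lt_irrefl _ hcase)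
        have hstar' := hstar x hx y ⟨ht₀m.1.trans_le hymem.1, hyx⟩
        rw [hyu, neg_sq] at hstar'
        have h2 : (1 + M ^ 2) ^ ((3:ℝ)/2) * s ≤ 3 * M ^ 3 * s :=
          mul_le_mul_of_nonneg_right (aux_rpow_le M hM1.le) hs0.le
        have h3 := aux_calc s hs0
        rw [← hMdef] at h3
        calc u' x ≤ -M + (1 + M ^ 2) ^ ((3:ℝ)/2) * s := by rw [hsdef]; linarith [hstar']
          _ ≤ -M + 3 * M^3 * s := by linarith
          _ ≤ -(1/5) / Real.sqrt s := by linarith [h3]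
    -- contradiction: the decay integrand is integrable
    apply hNnotint
    have hcont2 : ContinuousOn (fun x => 1 / Real.sqrt (-(∫ t in a..x, ν t))) (Icc x₂ d) := by
      apply ContinuousOn.div continuousOn_const
      · exact Real.continuous_sqrt.comp_continuousOn
          ((hNcont.mono (Icc_subset_Icc hax₂.le le_rfl)).neg)
      · intro z hz
        have hzz : (∫ t in a..z, ν t) < 0 := hNneg z ⟨hax₂.trans_le hz.1, hz.2⟩
        exact ne_of_gt (Real.sqrt_pos.mpr (by linarith))
    have hInt2 : IntegrableOn (fun x => 1 / Real.sqrt (-(∫ t in a..x, ν t))) (Ico x₂ d) :=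
      (hcont2.integrableOn_Icc).mono Ico_subset_Icc_self le_rfl
    have hInt1 : IntegrableOn (fun x => 1 / Real.sqrt (-(∫ t in a..x, ν t))) (Ioo a x₂) := by
      have hmeas : AEStronglyMeasurable (fun x => 1 / Real.sqrt (-(∫ t in a..x, ν t)))
          (volume.restrict (Ioo a x₂)) := by
        apply ContinuousOn.aestronglyMeasurable _ measurableSet_Ioo
        apply ContinuousOn.div continuousOn_const
        · exact Real.continuous_sqrt.comp_continuousOn
            ((hNcont.mono (fun z hz => ⟨hz.1.le, (hz.2.trans hx₂d).le⟩)).neg)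
        · intro z hz
          have hzz : (∫ t in a..z, ν t) < 0 := hNneg z ⟨hz.1, (hz.2.trans hx₂d).le⟩
          exact ne_of_gt (Real.sqrt_pos.mpr (by linarith))
      have hg : IntegrableOn (fun x => 5 * u' x) (Ioo a x₂) :=
        (hu'_int.mono (fun z hz => ⟨hz.1, hz.2.trans ((hx₂x₁.trans_lt hx₁m.2).trans hm0b)⟩)
          le_rfl).const_mul 5
      refine Integrable.mono hg hmeas ?_
      rw [ae_restrict_iff' measurableSet_Ioo]
      refine ae_of_all _ (fun z hz => ?_)
      have hk := hkey z hz
      have hzz : (∫ t in a..z, ν t) < 0 := hNneg z ⟨hz.1, (hz.2.trans hx₂d).le⟩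
      have hr0 : 0 < Real.sqrt (-(∫ t in a..z, ν t)) := Real.sqrt_pos.mpr (by linarith)
      rw [Real.norm_eq_abs, Real.norm_eq_abs,
        abs_of_nonneg (by positivity : (0:ℝ) ≤ 1 / Real.sqrt (-(∫ t in a..z, ν t)))]
      have h5 : 1 / Real.sqrt (-(∫ t in a..z, ν t)) ≤ 5 * (-(u' z)) := by
        have h6 : (1/5) / Real.sqrt (-(∫ t in a..z, ν t)) ≤ -u' z := by
          rw [neg_div] at hk; linarith
        have h7 : (1:ℝ) / Real.sqrt (-(∫ t in a..z, ν t)) =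
            5 * ((1/5) / Real.sqrt (-(∫ t in a..z, ν t))) := by ring
        rw [h7]; linarith
      calc 1 / Real.sqrt (-(∫ t in a..z, ν t)) ≤ 5 * (-(u' z)) := h5
        _ ≤ |5 * u' z| := by
          rw [abs_mul, abs_of_nonneg (by norm_num : (0:ℝ) ≤ 5)]
          nlinarith [neg_abs_le (u' z), le_abs_self (u' z)]
    have := hInt1.union hInt2
    rwa [Ioo_union_Ico_eq_Ioo hax₂ hx₂d.le] at this
  -- Conclusion: the limit exists
  obtain ⟨B, hBle⟩ := hB
  have hne : (Ioo a m0).Nonempty := ⟨(a + m0)/2, by constructor <;> [linarith; linarith]⟩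
  have hmono' : MonotoneOn u' (Ioo a m0) :=
    hmono.mono (fun z hz => ⟨hz.1, hz.2.trans hm0b⟩)
  have hbdd : BddBelow (u' '' Ioo a m0) := by
    refine ⟨B, ?_⟩
    rintro w ⟨t, ht, rfl⟩
    exact hBle t ht
  have htend := MonotoneOn.tendsto_nhdsWithin_Ioo_right hne hmono' hbdd
  set L := sInf (u' '' Ioo a m0) with hL
  have hLle : ∀ x ∈ Ioo a b, L ≤ u' x := by
    intro x hx
    set t := (a + min x m0)/2 with htdef
    have hamin : a < min x m0 := lt_min hx.1 ham0
    have hta : a < t := by rw [htdef]; linarith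
    have htmin : t < min x m0 := by rw [htdef]; linarith
    have htm0 : t < m0 := htmin.trans_le (min_le_right _ _)
    have htx : t < x := htmin.trans_le (min_le_left _ _)
    have h1 : L ≤ u' t := csInf_le hbdd ⟨t, ⟨hta, htm0⟩, rfl⟩
    have h2 : u' t ≤ u' x := hmono ⟨hta, htm0.trans hm0b⟩ hx htx.le
    linarith
  refine ⟨⟨L, htend⟩, ?_⟩
  -- integrability of u'' near a
  intro c hc
  set q : ℕ → ℝ := fun n => a + (c - a)/(n + 2) with hqdef
  have hq_pos : ∀ n : ℕ, a < q n := by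
    intro n
    have : (0:ℝ) < (c - a)/(n + 2) := by
      apply div_pos (by linarith [hc.1]) (by positivity)
    rw [hqdef]; simpa using this
  have hq_le : ∀ n : ℕ, q n ≤ c := by
    intro n
    have h1 : (c - a)/((n:ℝ) + 2) ≤ c - a := by
      apply div_le_self (by linarith [hc.1])
      have : (0:ℝ) ≤ (n:ℝ) := Nat.cast_nonneg n
      linarith
    rw [hqdef]; simp only []; linarith
  have hq_tend : Tendsto q atTop (𝓝 a) := by
    have h1 : Tendsto (fun n : ℕ => ((n:ℝ) + 2)) atTop atTop :=
      tendsto_atTop_add_const_right atTop 2 tendsto_natCast_atTop_atTop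
    have h2 : Tendsto (fun n : ℕ => (c - a)/((n:ℝ) + 2)) atTop (𝓝 0) :=
      Tendsto.div_atTop tendsto_const_nhds h1
    have h3 := tendsto_const_nhds.add h2 (x := atTop) (f := fun _ : ℕ => a)
    rw [add_zero] at h3
    exact h3
  have hfi : ∀ n : ℕ, IntegrableOn u'' (Ioc (q n) c) :=
    fun n => (hu''IccInt (hq_pos n) (hq_le n) hc.2).mono Ioc_subset_Icc_self le_rfl
  have hIoc : IntegrableOn u'' (Ioc a c) := by
    apply MeasureTheory.integrableOn_Ioc_of_intervalIntegral_norm_bounded_left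
      (I := u' c - L) hfi hq_tend
    refine Eventually.of_forall (fun n => ?_)
    have heqn : ∫ x in Ioc (q n) c, ‖u'' x‖ = ∫ x in Ioc (q n) c, u'' x := by
      refine setIntegral_congr_ae measurableSet_Ioc ?_
      filter_upwards [hu''_nonneg] with t ht hmem
      rw [Real.norm_eq_abs, abs_of_nonneg (ht ⟨(hq_pos n).trans hmem.1,
        lt_of_le_of_lt hmem.2 hc.2⟩)]
    have hftc := hInt (hq_pos n) (hq_le n) hc.2
    have hLq : L ≤ u' (q n) := hLle (q n) ⟨hq_pos n, lt_of_le_of_lt (hq_le n) hc.2⟩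
    rw [heqn, ← intervalIntegral.integral_of_le (hq_le n)]
    linarith
  exact hIoc.mono Ioo_subset_Ioc_self le_rfl
end

section
/- Boundary regularity at the right endpoint in the nonpositive-curvature case, strong form of Theorem 3.2(jjjj). Let f : (a,b) × ℝ → ℝ and let u ∈ W^{1,1}(a,b) be continuously differentiable on (a,b) with u' locally absolutely continuous on (a,b), satisfying −(u'(x)/√(1+u'(x)²))' = f(x, u(x)) for almost every x ∈ (a,b), with f(x, u(x)) ≤ 0 for almost every x ∈ (a,b). Assume there exist δ > 0 and ν ∈ L¹(b−δ, b) such that f(x, u(x)) ≥ ν(x) for almost every x ∈ (b−δ, b), N(x) := ∫ₓ^b ν(t) dt < 0 for all x ∈ [b−δ, b), and ∫_{b−δ}^b dx/√(−N(x)) = +∞. Then the limit u'(b⁻) = lim_{x→b⁻} u'(x) is finite, and consequently u'' is integrable on (c, b) for every c ∈ (a,b). -/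
open Set Filter MeasureTheory Topology

set_option maxHeartbeats 2000000 in
/-- **Boundary regularity at the right endpoint under an integral decay condition
(Theorem 3.2(jjjj), strong form; nonpositive curvature).** If `u ∈ W^{1,1}(a,b)` is C¹ on `(a,b)` with `u'` locally
absolutely continuous, solves `-(u'/√(1+u'²))' = f(x,u) ≤ 0` a.e. (equivalently
`-u'' = f(x,u)(1+u'²)^{3/2}` a.e.), and there are `δ > 0` and `ν ∈ L¹(b-δ,b)` with
`f(x,u(x)) ≥ ν(x)` a.e. on `(b-δ,b)`, `N(x) = ∫_x^b ν < 0` on `[b-δ,b)`, and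
`∫_{b-δ}^b dx/√(-N(x)) = +∞`, then `u'(b⁻)` is finite and `u''` is integrable on `(c,b)`
for every `c ∈ (a,b)`. -/
theorem boundary_regularity_right_nonpos_curvature
    (a b : ℝ) (hab : a < b) (f : ℝ → ℝ → ℝ) (u u' u'' : ℝ → ℝ)
    -- u ∈ W^{1,1}(a,b)
    (hu_cont : ContinuousOn u (Icc a b))
    (hu'_int : IntegrableOn u' (Ioo a b))
    (hu_ftc : ∀ x ∈ Icc a b, u x = u a + ∫ t in a..x, u' t)
    -- u is C¹ on (a,b) with u' locally absolutely continuous, a.e. derivative u''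
    (hu_deriv : ∀ x ∈ Ioo a b, HasDerivAt u (u' x) x)
    (hu'_cont : ContinuousOn u' (Ioo a b))
    (hu'_locAC : ∀ c d : ℝ, a < c → c ≤ d → d < b →
      IntegrableOn u'' (Icc c d) ∧ ∀ x ∈ Icc c d, u' x = u' c + ∫ t in c..x, u'' t)
    -- the prescribed curvature equation a.e. in (a,b)
    (heq : ∀ᵐ x ∂volume, x ∈ Ioo a b →
      -u'' x = f x (u x) * (1 + u' x ^ 2) ^ ((3:ℝ)/2))
    -- nonpositive curvature
    (hsign : ∀ᵐ x ∂volume, x ∈ Ioo a b → f x (u x) ≤ 0)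
    -- integral decay condition at the right endpoint
    (hdecay : ∃ δ > (0:ℝ), a ≤ b - δ ∧ ∃ ν : ℝ → ℝ,
      IntegrableOn ν (Ioo (b - δ) b) ∧
      (∀ᵐ x ∂volume, x ∈ Ioo (b - δ) b → ν x ≤ f x (u x)) ∧
      (∀ x ∈ Ico (b - δ) b, (∫ t in x..b, ν t) < 0) ∧
      ¬ IntegrableOn (fun x => 1 / Real.sqrt (-(∫ t in x..b, ν t))) (Ioo (b - δ) b)) :
    (∃ L : ℝ, Tendsto u' (𝓝[<] b) (𝓝 L)) ∧
    ∀ c ∈ Ioo a b, IntegrableOn u'' (Ioo c b) := by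
  obtain ⟨δ, hδ, haδ, ν, hν_int, hνf, hN_neg, hN_div⟩ := hdecay
  have hP : ∀ t : ℝ, (0:ℝ) < (1 + u' t ^ 2) ^ ((3:ℝ)/2) := fun t =>
    Real.rpow_pos_of_pos (by positivity) _
  have hu''_nonneg : ∀ᵐ t ∂volume, t ∈ Ioo a b → 0 ≤ u'' t := by
    filter_upwards [heq, hsign] with t h1 h2 ht
    have e := h1 ht
    have hf := h2 ht
    nlinarith [hP t]
  have hmono : ∀ x ∈ Ioo a b, ∀ y ∈ Ioo a b, x ≤ y → u' x ≤ u' y := by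
    intro x hx y hy hxy
    have hftc := (hu'_locAC x y hx.1 hxy hy.2).2 y ⟨hxy, le_rfl⟩
    have h0 : 0 ≤ ∫ t in x..y, u'' t := by
      apply intervalIntegral.integral_nonneg_of_ae_restrict hxy
      filter_upwards [ae_restrict_of_ae hu''_nonneg, ae_restrict_mem measurableSet_Icc]
        with t h1 h2
      exact h1 ⟨lt_of_lt_of_le hx.1 h2.1, lt_of_le_of_lt h2.2 hy.2⟩
    linarith
  by_cases hbdd : ∃ M, ∀ x ∈ Ioo a b, u' x ≤ M
  · obtain ⟨M, hM⟩ := hbdd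
    constructor
    · refine ⟨sSup (u' '' Ioo a b),
        MonotoneOn.tendsto_nhdsWithin_Ioo_left ⟨(a+b)/2, by constructor <;> linarith⟩
          (fun x hx y hy h => hmono x hx y hy h) ⟨M, ?_⟩⟩
      rintro _ ⟨t, ht, rfl⟩; exact hM t ht
    · intro c hc
      set d : ℕ → ℝ := fun n => b - (b - c)/(n+1) with hd_def
      have hseq : ∀ n : ℕ, d n ∈ Ico c b := by
        intro n
        constructor
        · have h1 : (b - c)/(n+1) ≤ b - c := by
            apply div_le_self (by linarith [hc.2])
            have : (0:ℝ) ≤ (n:ℝ) := Nat.cast_nonneg n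
            linarith
          simp only [hd_def]; linarith
        · have h2 : (0:ℝ) < (b - c)/(n+1) := by
            apply div_pos (by linarith [hc.2]) (by positivity)
          simp only [hd_def]; linarith
      have hd_tend : Tendsto d atTop (𝓝 b) := by
        have h0 : Tendsto (fun n : ℕ => (b - c) * (1/(n+1))) atTop (𝓝 ((b-c) * 0)) :=
          tendsto_one_div_add_atTop_nhds_zero_nat.const_mul (b - c)
      -- d n = b - (b-c) * (1/(n+1))
        have : Tendsto (fun n : ℕ => b - (b - c) * (1/(n+1))) atTop (𝓝 (b - (b-c)*0)) :=
          tendsto_const_nhds.sub h0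
        simpa [hd_def, mul_one_div, div_eq_mul_inv] using this
      have hfi : ∀ n, IntegrableOn u'' (Ioc c (d n)) :=
        fun n => ((hu'_locAC c (d n) hc.1 (hseq n).1 (hseq n).2).1).mono_set Ioc_subset_Icc_self
      have hbound : ∀ n, (∫ x in Ioc c (d n), ‖u'' x‖) ≤ M - u' c := by
        intro n
        have hcd := (hseq n).1
        have hdb := (hseq n).2
        have hd_mem : d n ∈ Ioo a b := ⟨lt_of_lt_of_le hc.1 hcd, hdb⟩
        have hftc := (hu'_locAC c (d n) hc.1 hcd hdb).2 (d n) ⟨hcd, le_rfl⟩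
        have h1 : (∫ x in Ioc c (d n), ‖u'' x‖) = ∫ x in Ioc c (d n), u'' x := by
          apply setIntegral_congr_ae measurableSet_Ioc
          filter_upwards [hu''_nonneg] with t h ht
          exact Real.norm_of_nonneg (h ⟨lt_of_lt_of_le hc.1 ht.1.le, lt_of_le_of_lt ht.2 hdb⟩)
        have h2 : (∫ x in Ioc c (d n), u'' x) = ∫ x in c..(d n), u'' x :=
          (intervalIntegral.integral_of_le hcd).symm
        have h3 := hM (d n) hd_mem
        rw [h1, h2]; linarith
      have key : IntegrableOn u'' (Ioc c b) :=
        integrableOn_Ioc_of_intervalIntegral_norm_bounded_right hfi hd_tend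
          (Eventually.of_forall hbound)
      exact key.mono_set Ioo_subset_Ioc_self
  · exfalso
    push_neg at hbdd
    have hbδ : b - δ < b := by linarith
    have hν_Icc : IntegrableOn ν (Icc (b-δ) b) := by
      rwa [integrableOn_Icc_iff_integrableOn_Ioo]
    have hN_cont : ContinuousOn (fun x => ∫ t in x..b, ν t) (Icc (b-δ) b) := by
      have h := intervalIntegral.continuousOn_primitive_interval_left
        (show IntegrableOn ν (uIcc (b-δ) b) volume by rwa [uIcc_of_le hbδ.le])
      rwa [uIcc_of_le hbδ.le] at h
    obtain ⟨z, hz_mem, hz⟩ := hbdd 1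
    set m := max a (b - δ) with hm_def
    have hmb : m < b := max_lt hab hbδ
    have ham : a ≤ m := le_max_left _ _
    have hδm : b - δ ≤ m := le_max_right _ _
    set x₀ := max z ((m+b)/2) with hx₀_def
    have hx₀_mem : x₀ ∈ Ioo a b := by
      constructor
      · have : a < (m+b)/2 := by linarith
        exact lt_of_lt_of_le this (le_max_right _ _)
      · exact max_lt hz_mem.2 (by linarith)
    have hx₀δ : b - δ < x₀ := by
      have : b - δ < (m+b)/2 := by linarith
      exact lt_of_lt_of_le this (le_max_right _ _)
    have hx₀1 : 1 ≤ u' x₀ :=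
      le_trans hz.le (hmono z hz_mem x₀ hx₀_mem (le_max_left _ _))
    have hkey : ∀ x ∈ Ico x₀ b, 1 / Real.sqrt (-(∫ t in x..b, ν t)) ≤ 4 * u' x := by
      intro x hx
      have hx_mem : x ∈ Ioo a b := ⟨lt_of_lt_of_le hx₀_mem.1 hx.1, hx.2⟩
      set s := u' x with hs_def
      have hs1 : 1 ≤ s := le_trans hx₀1 (hmono x₀ hx₀_mem x hx_mem hx.1)
      have hs0 : 0 < s := by linarith
      obtain ⟨z', hz'_mem, hz'⟩ := hbdd (2*s)
      set w := max z' ((x+b)/2) with hw_def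
      have hw_mem : w ∈ Ioo a b := by
        constructor
        · exact lt_of_lt_of_le (by linarith [hx_mem.1, hx.2]) (le_max_right _ _)
        · exact max_lt hz'_mem.2 (by linarith [hx.2])
      have hxw : x < w := by
        have : x < (x+b)/2 := by linarith [hx.2]
        exact lt_of_lt_of_le this (le_max_right _ _)
      have hw2s : 2*s ≤ u' w :=
        le_trans hz'.le (hmono z' hz'_mem w hw_mem (le_max_left _ _))
      have hsubw : Icc x w ⊆ Ioo a b := fun t ht =>
        ⟨lt_of_lt_of_le hx_mem.1 ht.1, lt_of_le_of_lt ht.2 hw_mem.2⟩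
      obtain ⟨y, hy_mem, hy⟩ := intermediate_value_Icc hxw.le (hu'_cont.mono hsubw)
        (⟨by linarith, hw2s⟩ : 2*s ∈ Icc (u' x) (u' w))
      have hxy : x ≤ y := hy_mem.1
      have hyb : y < b := lt_of_le_of_lt hy_mem.2 hw_mem.2
      have hy_Ioo : y ∈ Ioo a b := hsubw hy_mem
      have hIccsub : Icc x y ⊆ Ioo a b := fun t ht =>
        ⟨lt_of_lt_of_le hx_mem.1 ht.1, lt_of_le_of_lt ht.2 hyb⟩
      have hIccsubδ : Icc x y ⊆ Ioo (b-δ) b := fun t ht =>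
        ⟨lt_of_lt_of_le (lt_of_lt_of_le hx₀δ hx.1) ht.1, lt_of_le_of_lt ht.2 hyb⟩
      set K := (1 + (2*s)^2) ^ ((3:ℝ)/2) with hK_def
      have hK_pos : 0 < K := Real.rpow_pos_of_pos (by positivity) _
      have hν_ii : IntervalIntegrable ν volume x y := by
        rw [intervalIntegrable_iff_integrableOn_Ioc_of_le hxy]
        exact (hν_int.mono_set hIccsubδ).mono_set Ioc_subset_Icc_self
      have hu''_ii : IntervalIntegrable u'' volume x y := by
        rw [intervalIntegrable_iff_integrableOn_Ioc_of_le hxy]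
        exact ((hu'_locAC x y hx_mem.1 hxy hyb).1).mono_set Ioc_subset_Icc_self
      have hftc := (hu'_locAC x y hx_mem.1 hxy hyb).2 y ⟨hxy, le_rfl⟩
      have hae : u'' ≤ᵐ[volume.restrict (Icc x y)] fun t => (-ν t) * K := by
        filter_upwards [ae_restrict_of_ae heq, ae_restrict_of_ae hsign,
          ae_restrict_of_ae hνf, ae_restrict_mem measurableSet_Icc] with t h1 h2 h3 ht
        have ht1 : t ∈ Ioo a b := hIccsub ht
        have ht2 : t ∈ Ioo (b-δ) b := hIccsubδ ht
        have e := h1 ht1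
        have hf0 := h2 ht1
        have hνt := h3 ht2
        have hu't_le : u' t ≤ 2*s := by
          have h := hmono t ht1 y hy_Ioo ht.2
          rw [hy] at h; exact h
        have hu't_ge : 0 ≤ u' t := le_trans (by linarith) (hmono x hx_mem t ht1 ht.1)
        have hPle : (1 + u' t ^ 2) ^ ((3:ℝ)/2) ≤ K := by
          apply Real.rpow_le_rpow (by positivity) (by nlinarith) (by norm_num)
        have e2 : u'' t = (-f t (u t)) * ((1 + u' t ^ 2) ^ ((3:ℝ)/2)) := by
          rw [neg_mul]; linarith
        calc u'' t = (-f t (u t)) * ((1 + u' t ^ 2) ^ ((3:ℝ)/2)) := e2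
          _ ≤ (-ν t) * ((1 + u' t ^ 2) ^ ((3:ℝ)/2)) :=
              mul_le_mul_of_nonneg_right (by linarith) (hP t).le
          _ ≤ (-ν t) * K := mul_le_mul_of_nonneg_left hPle (by linarith)
      have hint : (∫ t in x..y, u'' t) ≤ ∫ t in x..y, (-ν t) * K :=
        intervalIntegral.integral_mono_ae_restrict hxy hu''_ii (hν_ii.neg.mul_const K) hae
      have hval : (∫ t in x..y, u'' t) = s := by
        rw [hy] at hftc; linarith
      have hmul : (∫ t in x..y, (-ν t) * K) = (∫ t in x..y, -ν t) * K :=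
        intervalIntegral.integral_mul_const K _
      have hneg : (∫ t in x..y, -ν t) = -∫ t in x..y, ν t := intervalIntegral.integral_neg
      have hν_yb : IntervalIntegrable ν volume y b := by
        rw [intervalIntegrable_iff_integrableOn_Ioc_of_le hyb.le,
          integrableOn_Ioc_iff_integrableOn_Ioo]
        exact hν_int.mono_set (fun t ht =>
          ⟨lt_trans (lt_of_lt_of_le hx₀δ (le_trans hx.1 hxy)) ht.1, ht.2⟩)
      have hsplit : (∫ t in x..y, ν t) + (∫ t in y..b, ν t) = ∫ t in x..b, ν t :=
        intervalIntegral.integral_add_adjacent_intervals hν_ii hν_yb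
      have hNy : (∫ t in y..b, ν t) < 0 :=
        hN_neg y ⟨le_trans hx₀δ.le (le_trans hx.1 hxy), hyb⟩
      have hNx : s / K ≤ -(∫ t in x..b, ν t) := by
        have h5 : s ≤ (-∫ t in x..y, ν t) * K := by
          rw [← hneg, ← hmul]; linarith
        have h6 : s / K ≤ -∫ t in x..y, ν t := (div_le_iff₀ hK_pos).2 h5
        linarith
      have hK12 : K ≤ 12 * s^3 := by
        have h1 : (1 + (2*s)^2 : ℝ) ≤ 5 * s^2 := by nlinarith
        have h2 : K ≤ ((5:ℝ)*s^2) ^ ((3:ℝ)/2) :=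
          Real.rpow_le_rpow (by positivity) h1 (by norm_num)
        have h4 : ((s:ℝ)^2) ^ ((3:ℝ)/2) = s ^ (3:ℕ) := by
          rw [← Real.rpow_natCast s 2, ← Real.rpow_mul hs0.le, ← Real.rpow_natCast s 3]
          norm_num
        have h3 : ((5:ℝ)*s^2) ^ ((3:ℝ)/2) = 5 ^ ((3:ℝ)/2) * s^3 := by
          rw [Real.mul_rpow (by norm_num) (sq_nonneg s), h4]
        have h5 : (5:ℝ) ^ ((3:ℝ)/2) ≤ 12 := by
          have e : ((5:ℝ) ^ ((3:ℝ)/2)) ^ (2:ℕ) = 5 ^ (3:ℕ) := by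
            rw [← Real.rpow_natCast ((5:ℝ) ^ ((3:ℝ)/2)) 2, ← Real.rpow_mul (by norm_num),
              ← Real.rpow_natCast (5:ℝ) 3]
            norm_num
          have hnn := Real.rpow_nonneg (show (0:ℝ) ≤ 5 by norm_num) ((3:ℝ)/2)
          have := (pow_le_pow_iff_left₀ hnn (show (0:ℝ) ≤ 12 by norm_num)
            (two_ne_zero)).1 (by rw [e]; norm_num)
          exact this
        calc K ≤ ((5:ℝ)*s^2) ^ ((3:ℝ)/2) := h2
          _ = 5 ^ ((3:ℝ)/2) * s^3 := h3
          _ ≤ 12 * s^3 := mul_le_mul_of_nonneg_right h5 (by positivity)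
      have h7 : s / (12*s^3) ≤ s / K := by
        apply div_le_div_of_nonneg_left hs0.le hK_pos hK12
      have h8 : s / (12*s^3) = 1/(12*s^2) := by
        field_simp
      have hNx2 : 1/(12*s^2) ≤ -(∫ t in x..b, ν t) := by
        rw [← h8]; exact h7.trans hNx
      have hsq : 1 / Real.sqrt (12*s^2) ≤ Real.sqrt (-(∫ t in x..b, ν t)) := by
        have h := Real.sqrt_le_sqrt hNx2
        rw [show (1:ℝ)/(12*s^2) = (12*s^2)⁻¹ from one_div _, Real.sqrt_inv] at h
        rwa [one_div]
      have h12 : Real.sqrt (12*s^2) ≤ 4*s := by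
        have h16 : Real.sqrt (12*s^2) ≤ Real.sqrt (16*s^2) := Real.sqrt_le_sqrt (by nlinarith)
        have he : Real.sqrt (16*s^2) = 4*s := by
          rw [show (16:ℝ)*s^2 = (4*s)^2 by ring, Real.sqrt_sq (by linarith)]
        linarith
      have hpos2 : 0 < 1 / Real.sqrt (12*s^2) := by
        have h0 : 0 < Real.sqrt (12*s^2) := Real.sqrt_pos.2 (by nlinarith)
        positivity
      calc 1 / Real.sqrt (-(∫ t in x..b, ν t))
          ≤ 1 / (1 / Real.sqrt (12*s^2)) := one_div_le_one_div_of_le hpos2 hsq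
        _ = Real.sqrt (12*s^2) := one_div_one_div _
        _ ≤ 4*s := h12
    apply hN_div
    have hcont2 : ContinuousOn (fun x => 1 / Real.sqrt (-(∫ t in x..b, ν t))) (Ico (b-δ) b) := by
      apply ContinuousOn.div continuousOn_const
      · exact Real.continuous_sqrt.comp_continuousOn (hN_cont.mono Ico_subset_Icc_self).neg
      · intro t ht
        exact ne_of_gt (Real.sqrt_pos.2 (by linarith [hN_neg t ht]))
    have hpart1 : IntegrableOn (fun x => 1 / Real.sqrt (-(∫ t in x..b, ν t))) (Ioc (b-δ) x₀) := by
      have hIccsub : Icc (b-δ) x₀ ⊆ Ico (b-δ) b := fun t ht =>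
        ⟨ht.1, lt_of_le_of_lt ht.2 hx₀_mem.2⟩
      exact ((hcont2.mono hIccsub).integrableOn_Icc).mono_set Ioc_subset_Icc_self
    have hpart2 : IntegrableOn (fun x => 1 / Real.sqrt (-(∫ t in x..b, ν t))) (Ioo x₀ b) := by
      have hmeas : AEStronglyMeasurable (fun x => 1 / Real.sqrt (-(∫ t in x..b, ν t)))
          (volume.restrict (Ioo x₀ b)) :=
        (hcont2.mono (fun t ht => ⟨le_trans hx₀δ.le ht.1.le, ht.2⟩)).aestronglyMeasurable
          measurableSet_Ioo
      have hg : Integrable (fun x => 4 * u' x) (volume.restrict (Ioo x₀ b)) :=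
        (hu'_int.mono_set (fun t ht => ⟨lt_trans hx₀_mem.1 ht.1, ht.2⟩)).const_mul 4
      apply Integrable.mono' hg hmeas
      filter_upwards [ae_restrict_mem measurableSet_Ioo] with t ht
      rw [Real.norm_eq_abs, abs_of_nonneg (by positivity)]
      exact hkey t ⟨ht.1.le, ht.2⟩
    exact (hpart1.union hpart2).mono_set (fun t ht => by
      by_cases h : t ≤ x₀
      exacts [Or.inl ⟨ht.1, h⟩, Or.inr ⟨not_le.1 h, ht.2⟩])
end

section
/- Interior regularity across a sign-change point, strong form of Theorem 3.3(h). Let ψ(s) = s/√(1+s²), let c ∈ (a,b), let f : (a,b) × ℝ → ℝ, and let u ∈ W^{1,1}(a,b) be differentiable on (a,b)∖{c} with u' locally absolutely continuous on (a,c) and on (c,b). Suppose there is an absolutely continuous function w on [a,b] with derivative w' ∈ L¹(a,b) such that w(x) = ψ(u'(x)) for every x ∈ (a,b)∖{c} and w'(x) = −f(x, u(x)) for almost every x ∈ (a,b). Assume f(x, u(x)) ≥ 0 for almost every x ∈ (a,c) and f(x, u(x)) ≤ 0 for almost every x ∈ (c,b). Assume further that either (left condition) there exist δ > 0 and μ ∈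 L¹(c−δ, c) with f(x, u(x)) ≤ μ(x) for almost every x ∈ (c−δ, c), M(x) := ∫ₓ^c μ(t) dt > 0 for all x ∈ [c−δ, c), and ∫_{c−δ}^c dx/√(M(x)) = +∞; or (right condition) there exist δ > 0 and ν ∈ L¹(c, c+δ) with f(x, u(x)) ≥ ν(x) for almost every x ∈ (c, c+δ), N(x) := ∫_c^x ν(t) dt < 0 for all x ∈ (c, c+δ], and ∫_c^{c+δ} dx/√(−N(x)) = +∞. Then |w(c)| < 1, u is continuously differentiable on all of (a,b) with u' locally absolutely continuous on (a,b), and −(u'(x)/√(1+u'(x)²))' = f(x, u(x)) for almost every x ∈ (a,b). -/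
open Set Filter MeasureTheory Topology

lemma sqrt_one_add_sq_pos (s : ℝ) : 0 < Real.sqrt (1 + s^2) :=
  Real.sqrt_pos.2 (by positivity)

lemma psi_abs_lt_one (s : ℝ) : |s / Real.sqrt (1 + s^2)| < 1 := by
  rw [abs_div, abs_of_pos (sqrt_one_add_sq_pos s), div_lt_one (sqrt_one_add_sq_pos s),
    ← Real.sqrt_sq_eq_abs]
  exact Real.sqrt_lt_sqrt (by positivity) (by linarith)

lemma psi_inv (s : ℝ) :
    (s / Real.sqrt (1 + s^2)) / Real.sqrt (1 - (s / Real.sqrt (1 + s^2))^2) = s := by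
  have hr : 0 < Real.sqrt (1 + s^2) := sqrt_one_add_sq_pos s
  have hr2 : Real.sqrt (1 + s^2) ^ 2 = 1 + s^2 := Real.sq_sqrt (by positivity)
  have h1 : 1 - (s / Real.sqrt (1 + s^2))^2 = (1 / Real.sqrt (1 + s^2))^2 := by
    field_simp
    rw [hr2]; ring
  rw [h1, Real.sqrt_sq (by positivity)]
  field_simp

lemma hasDerivAt_g {s : ℝ} (hs : |s| < 1) :
    HasDerivAt (fun t => t / Real.sqrt (1 - t^2))
      (1 / ((1 - s^2) * Real.sqrt (1 - s^2))) s := by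
  have h1 : 0 < 1 - s^2 := by nlinarith [sq_abs s, abs_nonneg s]
  have hsq : 0 < Real.sqrt (1 - s^2) := Real.sqrt_pos.2 h1
  have h2 : Real.sqrt (1 - s^2) ^ 2 = 1 - s^2 := Real.sq_sqrt h1.le
  have hd1 : HasDerivAt (fun t : ℝ => 1 - t^2) (-(2*s)) s := by
    simpa using ((hasDerivAt_pow 2 s).const_sub 1)
  have hd2 : HasDerivAt (fun t => Real.sqrt (1 - t^2))
      (1 / (2 * Real.sqrt (1 - s^2)) * (-(2*s))) s :=
    (Real.hasDerivAt_sqrt h1.ne').comp s hd1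
  have hd3 := (hasDerivAt_id s).div hd2 hsq.ne'
  convert hd3 using 1
  · rfl
  · rfl
  · rfl
  simp only [id]
  field_simp
  linear_combination s^2 * h2

lemma ptbound {W M : ℝ} (h1 : |W| < 1) (h2 : W ≤ -(1/2)) (h3 : 1 + W ≤ M) :
    1 / Real.sqrt M ≤ 2 * Real.sqrt 2 * |W / Real.sqrt (1 - W^2)| := by
  have hW1 : -1 < W := (abs_lt.1 h1).1
  have h1mW : 0 < 1 - W^2 := by nlinarith [sq_abs W, abs_nonneg W]
  have hs : 0 < Real.sqrt (1 - W^2) := Real.sqrt_pos.2 h1mW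
  have hMpos : 0 < M := lt_of_lt_of_le (by linarith) h3
  have hsM : 0 < Real.sqrt M := Real.sqrt_pos.2 hMpos
  have hs2 : 0 < Real.sqrt 2 := by positivity
  have key : Real.sqrt (1 - W^2) ≤ Real.sqrt 2 * Real.sqrt M := by
    rw [← Real.sqrt_mul (by norm_num) M]
    apply Real.sqrt_le_sqrt
    nlinarith
  have hWabs : 1/2 ≤ |W| := by
    rw [abs_of_neg (by linarith : W < 0)]; linarith
  rw [abs_div, abs_of_pos hs]
  calc 1 / Real.sqrt M = 2 * Real.sqrt 2 * ((1/2) / (Real.sqrt 2 * Real.sqrt M)) := by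
        field_simp
    _ ≤ 2 * Real.sqrt 2 * (|W| / Real.sqrt (1 - W^2)) := by
        apply mul_le_mul_of_nonneg_left _ (by positivity)
        exact div_le_div₀ (abs_nonneg W) hWabs hs key

lemma aux_ae_deriv {α β : ℝ} {h : ℝ → ℝ} (hint : IntegrableOn h (Ioo α β)) :
    ∀ᵐ x ∂(volume : Measure ℝ), x ∈ Ioo α β →
      HasDerivAt (fun y => ∫ t in α..y, h t) (h x) x := by

  set g : ℝ → ℝ := (Ioo α β).indicator h with hg
  have hgi : Integrable g := (integrable_indicator_iff measurableSet_Ioo).2 hint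
  have hloc : LocallyIntegrable g volume := hgi.locallyIntegrable
  filter_upwards [(IsUnifLocDoublingMeasure.vitaliFamily (volume : Measure ℝ) 1).ae_tendsto_average
    hloc] with x hx hxmem
  obtain ⟨hαx, hxβ⟩ := hxmem
  have hII : ∀ p q : ℝ, α ≤ p → p ≤ q → q < β → IntervalIntegrable h volume p q := by
    intro p q hp hpq hq
    rw [intervalIntegrable_iff_integrableOn_Ioc_of_le hpq]
    exact hint.mono_set (fun t ht => ⟨lt_of_le_of_lt hp ht.1, lt_of_le_of_lt ht.2 hq⟩)
  have hgx : g x = h x := indicator_of_mem (show x ∈ Ioo α β from ⟨hαx, hxβ⟩) h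
  set F : ℝ → ℝ := fun y => ∫ t in α..y, h t with hF
  -- right limit
  have hR : Tendsto (fun y => ⨍ t in Icc x y, g t) (𝓝[>] x) (𝓝 (h x)) := by
    rw [← hgx]
    exact hx.comp (Real.tendsto_Icc_vitaliFamily_right x)
  have hRslope : ∀ᶠ y in 𝓝[>] x, (fun y => ⨍ t in Icc x y, g t) y = slope F x y := by
    filter_upwards [Ioo_mem_nhdsGT_of_mem (⟨le_refl x, hxβ⟩ : x ∈ Ico x β)] with y hy
    have hxy : x < y := hy.1
    have hyβ : y < β := hy.2
    have h1 : F y - F x = ∫ t in x..y, h t :=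
      intervalIntegral.integral_interval_sub_left (hII α y le_rfl (by linarith) hyβ)
        (hII α x le_rfl hαx.le hxβ)
    have h2 : ∫ t in x..y, h t = ∫ t in Icc x y, g t := by
      rw [intervalIntegral.integral_of_le hxy.le, ← integral_Icc_eq_integral_Ioc]
      refine (setIntegral_congr_fun measurableSet_Icc (fun t ht => ?_)).symm
      exact indicator_of_mem (show t ∈ Ioo α β from
        ⟨lt_of_lt_of_le hαx ht.1, lt_of_le_of_lt ht.2 hyβ⟩) h
    rw [slope_def_field, h1, h2, setAverage_eq, Real.volume_real_Icc_of_le (by linarith), smul_eq_mul]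
    ring
  have hRlim : Tendsto (slope F x) (𝓝[>] x) (𝓝 (h x)) := hR.congr' hRslope
  -- left limit
  have hL : Tendsto (fun y => ⨍ t in Icc y x, g t) (𝓝[<] x) (𝓝 (h x)) := by
    rw [← hgx]
    exact hx.comp (Real.tendsto_Icc_vitaliFamily_left x)
  have hLslope : ∀ᶠ y in 𝓝[<] x, (fun y => ⨍ t in Icc y x, g t) y = slope F x y := by
    filter_upwards [Ioo_mem_nhdsLT_of_mem (⟨hαx, le_refl x⟩ : x ∈ Ioc α x)] with y hy
    have hαy : α < y := hy.1
    have hyx : y < x := hy.2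
    have h1 : F x - F y = ∫ t in y..x, h t :=
      intervalIntegral.integral_interval_sub_left (hII α x le_rfl hαx.le hxβ)
        (hII α y le_rfl hαy.le (by linarith))
    have h2 : ∫ t in y..x, h t = ∫ t in Icc y x, g t := by
      rw [intervalIntegral.integral_of_le hyx.le, ← integral_Icc_eq_integral_Ioc]
      refine (setIntegral_congr_fun measurableSet_Icc (fun t ht => ?_)).symm
      exact indicator_of_mem (show t ∈ Ioo α β from
        ⟨lt_of_lt_of_le hαy ht.1, lt_of_le_of_lt ht.2 hxβ⟩) h
    rw [slope_def_field, setAverage_eq, Real.volume_real_Icc_of_le (by linarith), smul_eq_mul, ← h2, ← h1]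
    have hne : x - y ≠ 0 := by linarith
    have hne' : y - x ≠ 0 := by linarith
    field_simp
    ring
  have hLlim : Tendsto (slope F x) (𝓝[<] x) (𝓝 (h x)) := hL.congr' hLslope
  have : Tendsto (slope F x) (𝓝[≠] x) (𝓝 (h x)) := by
    rw [← nhdsLT_sup_nhdsGT]
    exact tendsto_sup.2 ⟨hLlim, hRlim⟩
  exact hasDerivAt_iff_tendsto_slope.2 this

/-- **Interior regularity across a sign-change point (Theorem 3.3(h), strong form).**
`u ∈ W^{1,1}(a,b)` is differentiable off `c`, with `u'` locally absolutely continuous on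
`(a,c)` and `(c,b)`; the flux `w` is absolutely continuous on `[a,b]` with `w = ψ(u')` off `c`
and `w' = -f(x,u)` a.e.; `f(·,u(·)) ≥ 0` on `(a,c)` and `≤ 0` on `(c,b)`; and an integral decay
condition holds on the left or on the right of `c`. Then `|w(c)| < 1`, `u` is C¹ on the whole
of `(a,b)` with derivative `ψ⁻¹(w)` locally absolutely continuous, and the prescribed curvature
equation `-(ψ(u'))' = f(x,u)` holds a.e. in `(a,b)`. -/
theorem interior_regularity_sign_change_h
    (a b c : ℝ) (hc : c ∈ Ioo a b) (f : ℝ → ℝ → ℝ) (u u' w w' : ℝ → ℝ)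
    -- u ∈ W^{1,1}(a,b)
    (hu_cont : ContinuousOn u (Icc a b))
    (hu'_int : IntegrableOn u' (Ioo a b))
    (hu_ftc : ∀ x ∈ Icc a b, u x = u a + ∫ t in a..x, u' t)
    -- u is differentiable on (a,b) ∖ {c}
    (hu_deriv : ∀ x ∈ Ioo a b, x ≠ c → HasDerivAt u (u' x) x)
    -- u' is locally absolutely continuous on (a,c) and on (c,b)
    (hlocAC₁ : ∀ c₁ d₁ : ℝ, a < c₁ → c₁ ≤ d₁ → d₁ < c → ∃ V : ℝ → ℝ,
      IntegrableOn V (Icc c₁ d₁) ∧ ∀ x ∈ Icc c₁ d₁, u' x = u' c₁ + ∫ t in c₁..x, V t)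
    (hlocAC₂ : ∀ c₁ d₁ : ℝ, c < c₁ → c₁ ≤ d₁ → d₁ < b → ∃ V : ℝ → ℝ,
      IntegrableOn V (Icc c₁ d₁) ∧ ∀ x ∈ Icc c₁ d₁, u' x = u' c₁ + ∫ t in c₁..x, V t)
    -- the flux w is absolutely continuous on [a,b] with derivative w' ∈ L¹(a,b)
    (hw'_int : IntegrableOn w' (Ioo a b))
    (hw_ftc : ∀ x ∈ Icc a b, w x = w a + ∫ t in a..x, w' t)
    (hw_eq : ∀ x ∈ Ioo a b, x ≠ c → w x = u' x / Real.sqrt (1 + u' x ^ 2))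
    (hw' : ∀ᵐ x ∂volume, x ∈ Ioo a b → w' x = -f x (u x))
    -- sign conditions
    (hsign₁ : ∀ᵐ x ∂volume, x ∈ Ioo a c → 0 ≤ f x (u x))
    (hsign₂ : ∀ᵐ x ∂volume, x ∈ Ioo c b → f x (u x) ≤ 0)
    -- integral decay condition on the left or on the right of c
    (hdecay :
      (∃ δ > (0:ℝ), a ≤ c - δ ∧ ∃ μ : ℝ → ℝ,
        IntegrableOn μ (Ioo (c - δ) c) ∧
        (∀ᵐ x ∂volume, x ∈ Ioo (c - δ) c → f x (u x) ≤ μ x) ∧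
        (∀ x ∈ Ico (c - δ) c, 0 < ∫ t in x..c, μ t) ∧
        ¬ IntegrableOn (fun x => 1 / Real.sqrt (∫ t in x..c, μ t)) (Ioo (c - δ) c)) ∨
      (∃ δ > (0:ℝ), c + δ ≤ b ∧ ∃ ν : ℝ → ℝ,
        IntegrableOn ν (Ioo c (c + δ)) ∧
        (∀ᵐ x ∂volume, x ∈ Ioo c (c + δ) → ν x ≤ f x (u x)) ∧
        (∀ x ∈ Ioc c (c + δ), (∫ t in c..x, ν t) < 0) ∧
        ¬ IntegrableOn (fun x => 1 / Real.sqrt (-(∫ t in c..x, ν t))) (Ioo c (c + δ)))) :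
    |w c| < 1 ∧
    (∀ x ∈ Ioo a b, HasDerivAt u (w x / Real.sqrt (1 - w x ^ 2)) x) ∧
    ContinuousOn (fun x => w x / Real.sqrt (1 - w x ^ 2)) (Ioo a b) ∧
    (∀ c₁ d₁ : ℝ, a < c₁ → c₁ ≤ d₁ → d₁ < b → ∃ V : ℝ → ℝ,
      IntegrableOn V (Icc c₁ d₁) ∧ ∀ x ∈ Icc c₁ d₁,
        w x / Real.sqrt (1 - w x ^ 2) = w c₁ / Real.sqrt (1 - w c₁ ^ 2) + ∫ t in c₁..x, V t) ∧
    (∀ᵐ x ∂volume, x ∈ Ioo a b → HasDerivAt w (-f x (u x)) x) := by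
  obtain ⟨hac, hcb⟩ := hc
  have hab : a ≤ b := (hac.trans hcb).le
  have hcab : c ∈ Icc a b := ⟨hac.le, hcb.le⟩
  have haab : a ∈ Icc a b := ⟨le_rfl, hab⟩
  have hw'Icc : IntegrableOn w' (Icc a b) := by
    rw [integrableOn_Icc_iff_integrableOn_Ioo]; exact hw'_int
  have hu'Icc : IntegrableOn u' (Icc a b) := by
    rw [integrableOn_Icc_iff_integrableOn_Ioo]; exact hu'_int
  have hWII : ∀ x y : ℝ, x ∈ Icc a b → y ∈ Icc a b → IntervalIntegrable w' volume x y :=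
    fun x y hx hy => (hw'Icc.mono_set (uIcc_subset_Icc hx hy)).intervalIntegrable
  have hUII : ∀ x y : ℝ, x ∈ Icc a b → y ∈ Icc a b → IntervalIntegrable u' volume x y :=
    fun x y hx hy => (hu'Icc.mono_set (uIcc_subset_Icc hx hy)).intervalIntegrable
  have hw_cont : ContinuousOn w (Icc a b) := by
    have h0 : Icc a b = uIcc a b := (uIcc_of_le hab).symm
    have h1 : ContinuousOn (fun x => w a + ∫ t in a..x, w' t) (Icc a b) := by
      refine continuousOn_const.add ?_
      rw [h0]
      exact intervalIntegral.continuousOn_primitive_interval (h0 ▸ hw'Icc)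
    exact h1.congr hw_ftc
  have hne : ∀ z : ℝ, ∀ᵐ r : ℝ ∂(volume : Measure ℝ), r ≠ z := by
    intro z
    have h0 : {r : ℝ | ¬ r ≠ z} = {z} := by ext r; simp [not_not]
    rw [ae_iff, h0]
    exact measure_singleton z
  have hwsub : ∀ x ∈ Icc a b, ∀ y ∈ Icc a b, w y - w x = ∫ t in x..y, w' t := by
    intro x hx y hy
    have h := intervalIntegral.integral_interval_sub_left (hWII a y haab hy) (hWII a x haab hx)
    rw [hw_ftc y hy, hw_ftc x hx]
    linarith
  have hwa : ∀ x ∈ Ioo a b, x ≠ c → |w x| < 1 := by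
    intro x hx hxc
    rw [hw_eq x hx hxc]; exact psi_abs_lt_one _
  have hu'g : ∀ x ∈ Ioo a b, x ≠ c → u' x = w x / Real.sqrt (1 - w x ^ 2) := by
    intro x hx hxc
    rw [hw_eq x hx hxc]
    exact (psi_inv (u' x)).symm
  -- w attains its minimum at c
  have hwc_le_left : ∀ x ∈ Ioo a c, w c ≤ w x := by
    intro x hx
    have hxab : x ∈ Icc a b := ⟨hx.1.le, (hx.2.trans hcb).le⟩
    have h1 : w c - w x = ∫ t in x..c, w' t := hwsub x hxab c hcab
    have h2 : (∫ t in x..c, w' t) ≤ 0 := by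
      rw [intervalIntegral.integral_of_le hx.2.le]
      apply integral_nonpos_of_ae
      rw [Filter.EventuallyLE, ae_restrict_iff' measurableSet_Ioc]
      filter_upwards [hw', hsign₁, hne c] with t h₁ h₂ h₃ ht
      have htab : t ∈ Ioo a b := ⟨hx.1.trans ht.1, lt_of_le_of_lt ht.2 hcb⟩
      simp only [Pi.zero_apply]
      rw [h₁ htab]
      have := h₂ ⟨htab.1, lt_of_le_of_ne ht.2 h₃⟩
      linarith
    linarith
  have hwc_le_right : ∀ x ∈ Ioo c b, w c ≤ w x := by
    intro x hx
    have hxab : x ∈ Icc a b := ⟨(hac.trans hx.1).le, hx.2.le⟩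
    have h1 : w x - w c = ∫ t in c..x, w' t := hwsub c hcab x hxab
    have h2 : (0:ℝ) ≤ ∫ t in c..x, w' t := by
      rw [intervalIntegral.integral_of_le hx.1.le]
      apply integral_nonneg_of_ae
      rw [Filter.EventuallyLE, ae_restrict_iff' measurableSet_Ioc]
      filter_upwards [hw', hsign₂] with t h₁ h₂ ht
      have htab : t ∈ Ioo a b := ⟨hac.trans ht.1, ht.2.trans_lt hx.2⟩
      simp only [Pi.zero_apply]
      rw [h₁ htab]
      have := h₂ ⟨ht.1, ht.2.trans_lt hx.2⟩
      linarith
    linarith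
  have hwcc : ContinuousAt w c := hw_cont.continuousAt (Icc_mem_nhds hac hcb)
  have hwcle : |w c| ≤ 1 := by
    have hnb : (𝓝[Ioo a c] c).NeBot := by
      apply mem_closure_iff_nhdsWithin_neBot.1
      rw [closure_Ioo hac.ne]
      exact ⟨hac.le, le_rfl⟩
    have ht : Tendsto (fun x => |w x|) (𝓝[Ioo a c] c) (𝓝 |w c|) :=
      (hwcc.tendsto.mono_left nhdsWithin_le_nhds).abs
    refine le_of_tendsto ht ?_
    filter_upwards [self_mem_nhdsWithin] with x hx
    exact (hwa x ⟨hx.1, hx.2.trans hcb⟩ hx.2.ne).le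
  have hwc_lt : w c < 1 := by
    have hx0 : (a+c)/2 ∈ Ioo a c := ⟨by linarith, by linarith⟩
    have h1 := hwc_le_left _ hx0
    have h2 := hwa ((a+c)/2) ⟨hx0.1, hx0.2.trans hcb⟩ hx0.2.ne
    have := (abs_lt.1 h2).2
    linarith
  -- the hard part: w c ≠ -1
  have hwc_ne : w c ≠ -1 := by
    intro hneg
    have hev : ∀ᶠ x in 𝓝 c, w x < -(1/2) := by
      have h0 : Tendsto w (𝓝 c) (𝓝 (-1 : ℝ)) := hneg ▸ hwcc.tendsto
      exact h0.eventually_lt_const (by norm_num)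
    obtain ⟨ε, hε, hball⟩ := Metric.eventually_nhds_iff.1 hev
    rcases hdecay with ⟨δ, hδ, haδ, μ, hμint, hμge, hMpos, hMni⟩ |
      ⟨δ, hδ, hδb, ν, hνint, hνge, hNneg, hNni⟩
    · -- left decay condition
      set δ' : ℝ := min δ ε with hδ'def
      have hδ'pos : 0 < δ' := lt_min hδ hε
      have hδ'δ : δ' ≤ δ := min_le_left _ _
      have hδ'ε : δ' ≤ ε := min_le_right _ _
      have hμIoc : IntegrableOn μ (Ioc (c-δ) c) := by
        rw [integrableOn_Ioc_iff_integrableOn_Ioo]; exact hμint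
      have hμII : ∀ p q : ℝ, c - δ ≤ p → p ≤ q → q ≤ c → IntervalIntegrable μ volume p q := by
        intro p q h1 h2 h3
        rw [intervalIntegrable_iff_integrableOn_Ioc_of_le h2]
        exact hμIoc.mono_set (fun t ht => ⟨lt_of_le_of_lt h1 ht.1, ht.2.trans h3⟩)
      have hMcont : ContinuousOn (fun x => ∫ t in x..c, μ t) (Icc (c-δ) c) := by
        have h0 : Icc (c-δ) c = uIcc (c-δ) c := (uIcc_of_le (by linarith)).symm
        rw [h0]
        apply intervalIntegral.continuousOn_primitive_interval_left
        rw [← h0, integrableOn_Icc_iff_integrableOn_Ioo]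
        exact hμint
      have h1sqc : ContinuousOn (fun x => 1 / Real.sqrt (∫ t in x..c, μ t)) (Ico (c-δ) c) := by
        apply ContinuousOn.div continuousOn_const
        · exact ((hMcont.mono Ico_subset_Icc_self).sqrt)
        · intro x hx
          exact (Real.sqrt_pos.2 (hMpos x hx)).ne'
      have hkey : ∀ x ∈ Ioo (c - δ') c,
          1 / Real.sqrt (∫ t in x..c, μ t) ≤ (2 * Real.sqrt 2) * |u' x| := by
        intro x hx
        have hxδ : c - δ < x ∨ c - δ = x := by
          rcases lt_or_eq_of_le (by linarith [hx.1] : c - δ ≤ x) with h|h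
          exacts [Or.inl h, Or.inr h]
        have hxδ' : c - δ ≤ x := by linarith [hx.1]
        have hxδlt : c - δ' < x := hx.1
        have hxa : a < x := by
          rcases lt_or_ge a (c - δ) with h | h
          · linarith
          · linarith
        have hxb : x < b := hx.2.trans hcb
        have hxc : x ≠ c := hx.2.ne
        have hxab : x ∈ Ioo a b := ⟨hxa, hxb⟩
        have h2 : w x ≤ -(1/2) := by
          refine (hball ?_).le
          rw [Real.dist_eq, abs_of_neg (sub_neg.2 hx.2)]
          linarith [hx.1, hx.2]
        have h3 : 1 + w x ≤ ∫ t in x..c, μ t := by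
          have e1 : w c - w x = ∫ t in x..c, w' t :=
            hwsub x ⟨hxa.le, hxb.le⟩ c hcab
          have e2 : (- ∫ t in x..c, μ t) ≤ ∫ t in x..c, w' t := by
            rw [← intervalIntegral.integral_neg]
            apply intervalIntegral.integral_mono_ae_restrict hx.2.le
              ((hμII x c hxδ' hx.2.le le_rfl).neg) (hWII x c ⟨hxa.le, hxb.le⟩ hcab)
            rw [Filter.EventuallyLE, ae_restrict_iff' measurableSet_Icc]
            filter_upwards [hw', hμge, hne c] with t ht1 ht2 ht3 ht
            have htc : t < c := lt_of_le_of_ne ht.2 ht3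
            have htab : t ∈ Ioo a b := ⟨hxa.trans_le ht.1, htc.trans hcb⟩
            show -μ t ≤ w' t
            rw [ht1 htab]
            have := ht2 ⟨by linarith [ht.1], htc⟩
            linarith
          rw [hneg] at e1
          linarith
        have h4 := ptbound (hwa x hxab hxc) h2 h3
        rw [hu'g x hxab hxc]
        exact h4
      have hi1 : IntegrableOn (fun x => 1 / Real.sqrt (∫ t in x..c, μ t)) (Ioo (c-δ') c) := by
        have hss : Ioo (c-δ') c ⊆ Ioo a b := fun t ht => by
          constructor
          · rcases lt_or_ge a (c - δ) with h | h
            · linarith [ht.1]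
            · linarith [ht.1]
          · exact ht.2.trans hcb
        have hss2 : Ioo (c-δ') c ⊆ Ico (c-δ) c := fun t ht =>
          ⟨by linarith [ht.1], ht.2⟩
        apply Integrable.mono' (((hu'_int.mono_set hss).norm).const_mul (2 * Real.sqrt 2))
        · exact (h1sqc.mono hss2).aestronglyMeasurable measurableSet_Ioo
        · rw [ae_restrict_iff' measurableSet_Ioo]
          filter_upwards with x hx
          have h5 := hkey x hx
          rw [Real.norm_eq_abs, abs_of_nonneg (by positivity)]
          simpa [Real.norm_eq_abs] using h5
      have hi2 : IntegrableOn (fun x => 1 / Real.sqrt (∫ t in x..c, μ t)) (Ioc (c-δ) (c-δ')) := by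
        apply IntegrableOn.mono_set _ Ioc_subset_Icc_self
        apply ContinuousOn.integrableOn_compact isCompact_Icc
        apply h1sqc.mono
        intro t ht
        exact ⟨ht.1, by linarith [ht.2]⟩
      apply hMni
      apply IntegrableOn.mono_set (hi2.union hi1)
      intro t ht
      rcases le_or_gt t (c - δ') with h | h
      · exact Or.inl ⟨ht.1, h⟩
      · exact Or.inr ⟨h, ht.2⟩
    · -- right decay condition
      set δ' : ℝ := min δ ε with hδ'def
      have hδ'pos : 0 < δ' := lt_min hδ hε
      have hδ'δ : δ' ≤ δ := min_le_left _ _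
      have hδ'ε : δ' ≤ ε := min_le_right _ _
      have hνIoc : IntegrableOn ν (Ioc c (c+δ)) := by
        rw [integrableOn_Ioc_iff_integrableOn_Ioo]; exact hνint
      have hνII : ∀ p q : ℝ, c ≤ p → p ≤ q → q ≤ c + δ → IntervalIntegrable ν volume p q := by
        intro p q h1 h2 h3
        rw [intervalIntegrable_iff_integrableOn_Ioc_of_le h2]
        exact hνIoc.mono_set (fun t ht => ⟨lt_of_le_of_lt h1 ht.1, ht.2.trans h3⟩)
      have hNcont : ContinuousOn (fun x => ∫ t in c..x, ν t) (Icc c (c+δ)) := by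
        have h0 : Icc c (c+δ) = uIcc c (c+δ) := (uIcc_of_le (by linarith)).symm
        rw [h0]
        apply intervalIntegral.continuousOn_primitive_interval
        rw [← h0, integrableOn_Icc_iff_integrableOn_Ioo]
        exact hνint
      have h1sqc : ContinuousOn (fun x => 1 / Real.sqrt (-(∫ t in c..x, ν t))) (Ioc c (c+δ)) := by
        apply ContinuousOn.div continuousOn_const
        · exact (((hNcont.mono Ioc_subset_Icc_self).neg).sqrt)
        · intro x hx
          have : 0 < -(∫ t in c..x, ν t) := by linarith [hNneg x hx]
          exact (Real.sqrt_pos.2 this).ne'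
      have hkey : ∀ x ∈ Ioo c (c + δ'),
          1 / Real.sqrt (-(∫ t in c..x, ν t)) ≤ (2 * Real.sqrt 2) * |u' x| := by
        intro x hx
        have hxδ : x < c + δ := by linarith [hx.2]
        have hxa : a < x := hac.trans hx.1
        have hxb : x < b := by linarith [hx.2]
        have hxc : x ≠ c := hx.1.ne'
        have hxab : x ∈ Ioo a b := ⟨hxa, hxb⟩
        have h2 : w x ≤ -(1/2) := by
          refine (hball ?_).le
          rw [Real.dist_eq, abs_of_pos (by linarith [hx.1] : (0:ℝ) < x - c)]
          linarith [hx.2]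
        have h3 : 1 + w x ≤ -(∫ t in c..x, ν t) := by
          have e1 : w x - w c = ∫ t in c..x, w' t :=
            hwsub c hcab x ⟨hxa.le, hxb.le⟩
          have e2 : (∫ t in c..x, w' t) ≤ - ∫ t in c..x, ν t := by
            rw [← intervalIntegral.integral_neg]
            apply intervalIntegral.integral_mono_ae_restrict hx.1.le
              (hWII c x hcab ⟨hxa.le, hxb.le⟩) ((hνII c x le_rfl hx.1.le hxδ.le).neg)
            rw [Filter.EventuallyLE, ae_restrict_iff' measurableSet_Icc]
            filter_upwards [hw', hνge, hne c] with t ht1 ht2 ht3 ht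
            have htc : c < t := lt_of_le_of_ne ht.1 (Ne.symm ht3)
            have htab : t ∈ Ioo a b := ⟨hac.trans htc, lt_of_le_of_lt ht.2 hxb⟩
            show w' t ≤ -ν t
            rw [ht1 htab]
            have := ht2 ⟨htc, by linarith [ht.2]⟩
            linarith
          rw [hneg] at e1
          linarith
        have h4 := ptbound (hwa x hxab hxc) h2 h3
        rw [hu'g x hxab hxc]
        exact h4
      have hi1 : IntegrableOn (fun x => 1 / Real.sqrt (-(∫ t in c..x, ν t))) (Ioo c (c+δ')) := by
        have hss : Ioo c (c+δ') ⊆ Ioo a b := fun t ht =>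
          ⟨hac.trans ht.1, by linarith [ht.2]⟩
        have hss2 : Ioo c (c+δ') ⊆ Ioc c (c+δ) := fun t ht =>
          ⟨ht.1, by linarith [ht.2]⟩
        apply Integrable.mono' (((hu'_int.mono_set hss).norm).const_mul (2 * Real.sqrt 2))
        · exact (h1sqc.mono hss2).aestronglyMeasurable measurableSet_Ioo
        · rw [ae_restrict_iff' measurableSet_Ioo]
          filter_upwards with x hx
          have h5 := hkey x hx
          rw [Real.norm_eq_abs, abs_of_nonneg (by positivity)]
          simpa [Real.norm_eq_abs] using h5
      have hi2 : IntegrableOn (fun x => 1 / Real.sqrt (-(∫ t in c..x, ν t))) (Ico (c+δ') (c+δ)) := by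
        apply IntegrableOn.mono_set _ Ico_subset_Icc_self
        apply ContinuousOn.integrableOn_compact isCompact_Icc
        apply h1sqc.mono
        intro t ht
        exact ⟨by linarith [ht.1], ht.2⟩
      apply hNni
      apply IntegrableOn.mono_set (hi1.union hi2)
      intro t ht
      rcases lt_or_ge t (c + δ') with h | h
      · exact Or.inl ⟨ht.1, h⟩
      · exact Or.inr ⟨h, ht.2⟩
  have hwcabs : |w c| < 1 :=
    abs_lt.2 ⟨lt_of_le_of_ne (abs_le.1 hwcle).1 (Ne.symm hwc_ne), hwc_lt⟩
  have habs : ∀ x ∈ Ioo a b, |w x| < 1 := by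
    intro x hx
    by_cases hxc : x = c
    · rw [hxc]; exact hwcabs
    · exact hwa x hx hxc
  set φ : ℝ → ℝ := fun x => w x / Real.sqrt (1 - w x ^ 2) with hφdef
  have hwCA : ∀ x ∈ Ioo a b, ContinuousAt w x := fun x hx =>
    hw_cont.continuousAt (Icc_mem_nhds hx.1 hx.2)
  have hφcont : ContinuousOn φ (Ioo a b) := by
    intro x hx
    apply ContinuousAt.continuousWithinAt
    have h1 : ContinuousAt (fun s : ℝ => s / Real.sqrt (1 - s^2)) (w x) :=
      (hasDerivAt_g (habs x hx)).continuousAt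
    exact h1.comp (hwCA x hx)
  have hu'φ : ∀ x ∈ Ioo a b, x ≠ c → u' x = φ x := hu'g
  -- interval integrals of u' and φ agree
  have hintcongr : ∀ x ∈ Icc a b, ∀ y ∈ Icc a b,
      (∫ t in x..y, u' t) = ∫ t in x..y, φ t := by
    intro x hx y hy
    apply intervalIntegral.integral_congr_ae
    filter_upwards [hne c, hne b, hne a] with t ht hb2 ha2 htm
    have h1 : t ∈ Ioo a b := by
      rcases htm with ⟨h1, h2⟩
      constructor
      · exact lt_of_le_of_lt (le_min hx.1 hy.1) h1
      · exact lt_of_le_of_ne (h2.trans (max_le hx.2 hy.2)) hb2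
    exact hu'φ t h1 ht
  have hu_sub : ∀ x ∈ Icc a b, ∀ y ∈ Icc a b, u y = u x + ∫ t in x..y, φ t := by
    intro x hx y hy
    rw [hu_ftc y hy, hu_ftc x hx, ← hintcongr x hx y hy]
    have h := intervalIntegral.integral_interval_sub_left (hUII a y haab hy) (hUII a x haab hx)
    linarith
  -- u has derivative φ everywhere in (a,b)
  have hconc2 : ∀ x ∈ Ioo a b, HasDerivAt u (φ x) x := by
    intro x hx
    have hd : HasDerivAt (fun y => u x + ∫ t in x..y, φ t) (φ x) x := by
      apply HasDerivAt.const_add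
      apply intervalIntegral.integral_hasDerivAt_right
      · exact IntervalIntegrable.refl
      · exact hφcont.stronglyMeasurableAtFilter isOpen_Ioo x hx
      · exact hφcont.continuousAt (isOpen_Ioo.mem_nhds hx)
    apply hd.congr_of_eventuallyEq
    filter_upwards [Icc_mem_nhds hx.1 hx.2] with y hy
    exact hu_sub x (Ioo_subset_Icc_self hx) y hy
  -- a.e. differentiability of w
  have Hw : ∀ᵐ x ∂(volume : Measure ℝ), x ∈ Ioo a b → HasDerivAt w (w' x) x := by
    filter_upwards [aux_ae_deriv hw'_int] with x hx hxm
    have h1 := (hx hxm).const_add (w a)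
    apply h1.congr_of_eventuallyEq
    filter_upwards [Icc_mem_nhds hxm.1 hxm.2] with y hy
    exact hw_ftc y hy
  -- the candidate density for φ
  set V : ℝ → ℝ := fun t => 1 / ((1 - w t ^ 2) * Real.sqrt (1 - w t ^ 2)) * w' t with hVdef
  have hVgcont : ContinuousOn (fun t => 1 / ((1 - w t ^ 2) * Real.sqrt (1 - w t ^ 2)))
      (Ioo a b) := by
    intro x hx
    apply ContinuousAt.continuousWithinAt
    have h1 : (0:ℝ) < 1 - w x ^ 2 := by
      nlinarith [sq_abs (w x), abs_nonneg (w x), habs x hx]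
    have hsq : (0:ℝ) < Real.sqrt (1 - w x ^ 2) := Real.sqrt_pos.2 h1
    have hwc' := hwCA x hx
    have hc1 : ContinuousAt (fun t => 1 - w t ^ 2) x := by
      exact continuousAt_const.sub (hwc'.pow 2)
    apply ContinuousAt.div continuousAt_const
    · exact hc1.mul (Real.continuous_sqrt.continuousAt.comp hc1)
    · exact (mul_pos h1 hsq).ne'
  have hVint : ∀ p q : ℝ, a < p → q < b → IntegrableOn V (Icc p q) := by
    intro p q hp hq
    rcases le_or_gt p q with hpq | hpq
    · have hsub2 : Icc p q ⊆ Ioo a b := fun t ht => ⟨hp.trans_le ht.1, ht.2.trans_lt hq⟩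
      have hsub3 : Icc p q ⊆ Icc a b := hsub2.trans Ioo_subset_Icc_self
      obtain ⟨C, hC⟩ := isCompact_Icc.exists_bound_of_continuousOn (hVgcont.mono hsub2)
      apply Integrable.mono' (((hw'Icc.mono_set hsub3).norm).const_mul C)
      · exact (((hVgcont.mono hsub2).aestronglyMeasurable measurableSet_Icc).mul
          (hw'Icc.mono_set hsub3).aestronglyMeasurable)
      · rw [ae_restrict_iff' measurableSet_Icc]
        filter_upwards with t ht
        rw [hVdef]
        simp only [norm_mul]
        exact mul_le_mul_of_nonneg_right (hC t ht) (norm_nonneg _)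
    · rw [Icc_eq_empty (by linarith)]
      exact integrableOn_empty
  have hVII : ∀ p q : ℝ, a < p → p ≤ q → q < b → IntervalIntegrable V volume p q := by
    intro p q h1 h2 h3
    have := hVint p q h1 h3
    rw [← uIcc_of_le h2] at this
    exact this.intervalIntegrable
  -- Step A: absolute continuity of φ on closed intervals avoiding c
  have stepA : ∀ s t : ℝ, a < s → s ≤ t → t < b → (∀ y ∈ Icc s t, y ≠ c) →
      (∃ V₀ : ℝ → ℝ, IntegrableOn V₀ (Icc s t) ∧
        ∀ y ∈ Icc s t, u' y = u' s + ∫ r in s..y, V₀ r) →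
      ∀ y ∈ Icc s t, φ y = φ s + ∫ r in s..y, V r := by
    intro s t hs hst htb hnc ⟨V₀, hV₀int, hV₀⟩
    have hsubst : Icc s t ⊆ Ioo a b := fun y hy => ⟨hs.trans_le hy.1, hy.2.trans_lt htb⟩
    have hφV₀ : ∀ y ∈ Icc s t, φ y = φ s + ∫ r in s..y, V₀ r := by
      intro y hy
      rw [← hu'φ y (hsubst hy) (hnc y hy), ← hu'φ s (hsubst ⟨le_rfl, hst⟩) (hnc s ⟨le_rfl, hst⟩)]
      exact hV₀ y hy
    have hae : ∀ᵐ r ∂(volume : Measure ℝ), r ∈ Ioo s t → V₀ r = V r := by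
      filter_upwards [aux_ae_deriv (hV₀int.mono_set Ioo_subset_Icc_self), Hw] with r h1 h2 hr
      have hrab : r ∈ Ioo a b := hsubst (Ioo_subset_Icc_self hr)
      have hd1 : HasDerivAt φ (V₀ r) r := by
        have h3 := (h1 hr).const_add (φ s)
        apply h3.congr_of_eventuallyEq
        filter_upwards [Icc_mem_nhds hr.1 hr.2] with y hy
        exact hφV₀ y hy
      have hd2 : HasDerivAt φ (V r) r := by
        have hg := hasDerivAt_g (habs r hrab)
        have h4 := hg.comp r (h2 hrab)
        simpa [Function.comp_def, hVdef, hφdef] using h4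
      exact hd1.unique hd2
    intro y hy
    rw [hφV₀ y hy]
    congr 1
    apply intervalIntegral.integral_congr_ae
    filter_upwards [hae, hne t] with r h1 h2 hrm
    rw [uIoc_of_le hy.1] at hrm
    exact h1 ⟨hrm.1, lt_of_le_of_ne (hrm.2.trans hy.2) h2⟩
  -- instances of step A on the two sides
  have stepA1 : ∀ s y : ℝ, a < s → s ≤ y → y < c → φ y = φ s + ∫ r in s..y, V r := by
    intro s y hs hsy hyc
    refine stepA s y hs hsy (hyc.trans hcb) (fun z hz => (hz.2.trans_lt hyc).ne) ?_ y ⟨hsy, le_rfl⟩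
    exact hlocAC₁ s y hs hsy hyc
  have stepA2 : ∀ s y : ℝ, c < s → s ≤ y → y < b → φ y = φ s + ∫ r in s..y, V r := by
    intro s y hs hsy hyb
    refine stepA s y (hac.trans hs) hsy hyb (fun z hz => (hs.trans_le hz.1).ne') ?_ y ⟨hsy, le_rfl⟩
    exact hlocAC₂ s y hs hsy hyb
  have hφCA : ∀ x ∈ Ioo a b, ContinuousAt φ x := fun x hx =>
    hφcont.continuousAt (isOpen_Ioo.mem_nhds hx)
  have hprimCA : ∀ s ∈ Ioo a b, ∀ x ∈ Ioo a b,
      ContinuousAt (fun y => ∫ r in s..y, V r) x := by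
    intro s hs x hx
    set p : ℝ := (a + min s x)/2 with hp
    set q : ℝ := (max s x + b)/2 with hq
    have hps : p < min s x := by
      rcases le_or_gt s x with h|h
      · simp only [min_eq_left h]; rw [hp, min_eq_left h]; linarith [hs.1]
      · rw [hp, min_eq_right h.le]; linarith [hx.1]
    have hqs : max s x < q := by
      rcases le_or_gt s x with h|h
      · rw [hq, max_eq_right h]; linarith [hx.2]
      · rw [hq, max_eq_left h.le]; linarith [hs.2]
    have hap : a < p := by
      rcases le_or_gt s x with h|h
      · rw [hp, min_eq_left h]; linarith [hs.1]
      · rw [hp, min_eq_right h.le]; linarith [hx.1]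
    have hqb : q < b := by
      rcases le_or_gt s x with h|h
      · rw [hq, max_eq_right h]; linarith [hx.2]
      · rw [hq, max_eq_left h.le]; linarith [hs.2]
    have hIpq : IntegrableOn V (Icc p q) := hVint p q hap hqb
    have hpq : p ≤ q := by
      have h5 := (hps.trans_le (min_le_left s x)).trans ((le_max_left s x).trans_lt hqs)
      linarith
    have hcont : ContinuousOn (fun y => ∫ r in s..y, V r) (Icc p q) := by
      rw [← uIcc_of_le hpq]
      apply intervalIntegral.continuousOn_primitive_interval'
      · rw [intervalIntegrable_iff_integrableOn_Ioc_of_le hpq]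
        exact hIpq.mono_set Ioc_subset_Icc_self
      · rw [uIcc_of_le hpq]
        exact ⟨(hps.trans_le (min_le_left s x)).le, ((le_max_left s x).trans_lt hqs).le⟩
    apply hcont.continuousAt
    apply Icc_mem_nhds
    · exact hps.trans_le (min_le_right s x)
    · exact ((le_max_right s x).trans_lt hqs)
  -- Step B: from the left up to c
  have stepB : ∀ s : ℝ, a < s → s < c → φ c = φ s + ∫ r in s..c, V r := by
    intro s hs hsc
    have hnb : (𝓝[Ioo s c] c).NeBot := by
      apply mem_closure_iff_nhdsWithin_neBot.1
      rw [closure_Ioo hsc.ne]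
      exact ⟨hsc.le, le_rfl⟩
    have t1 : Tendsto φ (𝓝[Ioo s c] c) (𝓝 (φ c)) :=
      (hφCA c ⟨hac, hcb⟩).tendsto.mono_left nhdsWithin_le_nhds
    have t2 : Tendsto φ (𝓝[Ioo s c] c) (𝓝 (φ s + ∫ r in s..c, V r)) := by
      have h0 : Tendsto (fun y => φ s + ∫ r in s..y, V r) (𝓝[Ioo s c] c)
          (𝓝 (φ s + ∫ r in s..c, V r)) := by
        apply Tendsto.const_add
        exact ((hprimCA s ⟨hs, hsc.trans hcb⟩ c ⟨hac, hcb⟩).tendsto).mono_left nhdsWithin_le_nhds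
      apply h0.congr'
      filter_upwards [self_mem_nhdsWithin] with y hy
      exact (stepA1 s y hs hy.1.le hy.2).symm
    exact tendsto_nhds_unique t1 t2
  -- Step B': from c to the right
  have stepB' : ∀ y : ℝ, c < y → y < b → φ y = φ c + ∫ r in c..y, V r := by
    intro y hcy hyb
    have hnb : (𝓝[Ioo c y] c).NeBot := by
      apply mem_closure_iff_nhdsWithin_neBot.1
      rw [closure_Ioo hcy.ne]
      exact ⟨le_rfl, hcy.le⟩
    have t1 : Tendsto (fun s => φ s + ((∫ r in c..y, V r) - ∫ r in c..s, V r))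
        (𝓝[Ioo c y] c) (𝓝 (φ c + ((∫ r in c..y, V r) - ∫ r in c..c, V r))) := by
      apply Tendsto.add
      · exact (hφCA c ⟨hac, hcb⟩).tendsto.mono_left nhdsWithin_le_nhds
      · apply Tendsto.const_sub
        exact ((hprimCA c ⟨hac, hcb⟩ c ⟨hac, hcb⟩).tendsto).mono_left nhdsWithin_le_nhds
    rw [intervalIntegral.integral_same, sub_zero] at t1
    have t2 : Tendsto (fun s : ℝ => φ y) (𝓝[Ioo c y] c) (𝓝 (φ y)) := tendsto_const_nhds
    have t3 : Tendsto (fun s => φ s + ((∫ r in c..y, V r) - ∫ r in c..s, V r))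
        (𝓝[Ioo c y] c) (𝓝 (φ y)) := by
      apply t2.congr'
      filter_upwards [self_mem_nhdsWithin] with s hsm
      have e1 : φ y = φ s + ∫ r in s..y, V r := stepA2 s y hsm.1 hsm.2.le hyb
      have e2 : (∫ r in c..s, V r) + ∫ r in s..y, V r = ∫ r in c..y, V r :=
        intervalIntegral.integral_add_adjacent_intervals
          (hVII c s hac hsm.1.le (hsm.2.trans hyb))
          (hVII s y (hac.trans hsm.1) hsm.2.le hyb)
      rw [e1]
      linarith
    have := tendsto_nhds_unique t3 t1
    linarith
  -- combine into absolute continuity statements on either side of c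
  have key1 : ∀ s x : ℝ, a < s → s ≤ x → x ≤ c → φ x = φ s + ∫ r in s..x, V r := by
    intro s x hs hsx hxc
    rcases lt_or_eq_of_le hxc with h | h
    · exact stepA1 s x hs hsx h
    · subst h
      rcases lt_or_eq_of_le hsx with h2 | h2
      · exact stepB s hs h2
      · subst h2
        simp
  have key2 : ∀ s x : ℝ, c ≤ s → s ≤ x → x < b → φ x = φ s + ∫ r in s..x, V r := by
    intro s x hs hsx hxb
    rcases lt_or_eq_of_le hs with h | h
    · exact stepA2 s x h hsx hxb
    · subst h
      rcases lt_or_eq_of_le hsx with h2 | h2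
      · exact stepB' x h2 hxb
      · subst h2
        simp
  refine ⟨hwcabs, hconc2, hφcont, ?_, ?_⟩
  · -- local absolute continuity of φ
    intro c₁ d₁ h₁ h₂ h₃
    refine ⟨V, hVint c₁ d₁ h₁ h₃, ?_⟩
    intro x hx
    show φ x = φ c₁ + ∫ t in c₁..x, V t
    rcases le_or_gt x c with hxc | hcx
    · exact key1 c₁ x h₁ hx.1 hxc
    · rcases le_or_gt c c₁ with hcc | hcc
      · exact key2 c₁ x hcc hx.1 (lt_of_le_of_lt hx.2 h₃)
      · have e1 := key1 c₁ c h₁ hcc.le le_rfl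
        have e2 := key2 c x le_rfl hcx.le (lt_of_le_of_lt hx.2 h₃)
        have e3 : (∫ r in c₁..c, V r) + ∫ r in c..x, V r = ∫ r in c₁..x, V r :=
          intervalIntegral.integral_add_adjacent_intervals
            (hVII c₁ c h₁ hcc.le hcb)
            (hVII c x hac hcx.le (lt_of_le_of_lt hx.2 h₃))
        rw [e2, e1]
        linarith
  · -- the equation a.e.
    filter_upwards [Hw, hw'] with x h1 h2 hxm
    have h3 := h1 hxm
    rwa [h2 hxm] at h3
end

section
/- Energy estimate against an absolutely continuous comparison potential (step in the proof of Theorem 2.1). Let ε > 0 and let G : [0, ε] → ℝ be absolutely continuous with G(0) = 0. Let t₀ ∈ ℝ, δ > 0, and let v : [t₀, t₀+δ] → ℝ be absolutely continuous and strictly increasing with v(t₀) = 0 and 0 < v(t) ≤ ε for t ∈ (t₀, t₀+δ]. Assume v' is absolutely continuous on [t₀, t₀+δ] with v'(t₀) = 0, v'(t) > 0 for t ∈ (t₀, t₀+δ], and v''(s) ≤ G'(v(s)) for almost every s ∈ [t₀, t₀+δ]. Then (1/2)·(v'(t))² ≤ G(v(t)) for every t ∈ [t₀, t₀+δ]; in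 particular |v'(t)| ≤ √(2 G(v(t))) on [t₀, t₀+δ]. -/
open Set Filter MeasureTheory Topology

lemma sq_integral_eq_two_mul (g : ℝ → ℝ) (a b : ℝ)
    (hg : IntegrableOn g (Ioc a b)) :
    (∫ s in Ioc a b, g s) ^ 2 = 2 * ∫ s in Ioc a b, g s * ∫ r in Ioc a s, g r := by
  set μ := volume.restrict (Ioc a b) with hμ
  have hprod : Integrable (fun z : ℝ × ℝ => g z.1 * g z.2) (μ.prod μ) := hg.mul_prod hg
  have hA : MeasurableSet {z : ℝ × ℝ | z.2 ≤ z.1} := measurableSet_le measurable_snd measurable_fst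
  have htot : ∫ z : ℝ × ℝ, g z.1 * g z.2 ∂(μ.prod μ) = (∫ s in Ioc a b, g s) ^ 2 := by
    rw [integral_prod_mul]; ring
  have h1 : ∫ z in {z : ℝ × ℝ | z.2 ≤ z.1}, g z.1 * g z.2 ∂(μ.prod μ)
      = ∫ s in Ioc a b, g s * ∫ r in Ioc a s, g r := by
    rw [← integral_indicator hA, integral_prod _ (hprod.indicator hA)]
    refine integral_congr_ae ?_
    filter_upwards [ae_restrict_mem measurableSet_Ioc] with x hx
    have hx2 : x ≤ b := hx.2
    have heq : (fun y => ({z : ℝ × ℝ | z.2 ≤ z.1}).indicator (fun z : ℝ × ℝ => g z.1 * g z.2) (x, y))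
        = (Iic x).indicator (fun y => g x * g y) := by
      ext y; by_cases h : y ≤ x <;> simp [Set.indicator, h]
    rw [heq, integral_indicator measurableSet_Iic, hμ,
      Measure.restrict_restrict measurableSet_Iic]
    have hset : Iic x ∩ Ioc a b = Ioc a x := by
      ext y
      simp only [mem_inter_iff, mem_Iic, mem_Ioc]
      exact ⟨fun ⟨h1, h2, h3⟩ => ⟨h2, h1⟩, fun ⟨h1, h2⟩ => ⟨h2, h1, h2.trans hx2⟩⟩
    rw [hset, MeasureTheory.integral_const_mul]
  have h2 : ∫ z in {z : ℝ × ℝ | z.2 ≤ z.1}ᶜ, g z.1 * g z.2 ∂(μ.prod μ)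
      = ∫ s in Ioc a b, g s * ∫ r in Ioc a s, g r := by
    rw [← integral_indicator hA.compl, integral_prod_symm _ (hprod.indicator hA.compl)]
    refine integral_congr_ae ?_
    filter_upwards [ae_restrict_mem measurableSet_Ioc] with y hy
    have hy2 : y ≤ b := hy.2
    have heq : (fun x => ({z : ℝ × ℝ | z.2 ≤ z.1}ᶜ).indicator (fun z : ℝ × ℝ => g z.1 * g z.2) (x, y))
        = (Iio y).indicator (fun x => g x * g y) := by
      ext x; by_cases h : x < y
      · simp [Set.indicator, h, not_le.mpr h]
      · simp [Set.indicator, h, not_lt.mp h]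
    rw [heq, integral_indicator measurableSet_Iio, hμ,
      Measure.restrict_restrict measurableSet_Iio]
    have hset : Iio y ∩ Ioc a b = Ioo a y := by
      ext x
      simp only [mem_inter_iff, mem_Iio, mem_Ioc, mem_Ioo]
      exact ⟨fun ⟨h1, h2, h3⟩ => ⟨h2, h1⟩, fun ⟨h1, h2⟩ => ⟨h2, h1, h2.le.trans hy2⟩⟩
    rw [hset, ← integral_Ioc_eq_integral_Ioo, mul_comm (g y), MeasureTheory.integral_mul_const]
  have hsplit := integral_add_compl hA hprod
  rw [h1, h2, htot] at hsplit
  linarith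

/-- **Energy estimate against an absolutely continuous comparison potential (step in the proof
of Theorem 2.1).** If `G` is absolutely continuous on `[0,ε]` with `G(0) = 0`, `v` is absolutely
continuous and strictly increasing on `[t₀,t₀+δ]` with `v(t₀) = 0` and `0 < v ≤ ε` on
`(t₀,t₀+δ]`, `v'` is absolutely continuous with `v'(t₀) = 0`, `v' > 0` on `(t₀,t₀+δ]` and
`v'' ≤ G'(v)` a.e., then `(1/2)(v')² ≤ G(v)` and `|v'| ≤ √(2 G(v))` on `[t₀,t₀+δ]`. -/
theorem energy_estimate_comparison_potential
    (ε : ℝ) (hε : 0 < ε) (G G' : ℝ → ℝ)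
    -- G absolutely continuous on [0,ε] with a.e. derivative G' and G(0) = 0
    (hG'_int : IntegrableOn G' (Icc 0 ε))
    (hG_ftc : ∀ s ∈ Icc (0:ℝ) ε, G s = G 0 + ∫ r in (0:ℝ)..s, G' r)
    (hG0 : G 0 = 0)
    (t₀ δ : ℝ) (hδ : 0 < δ) (v v' v'' : ℝ → ℝ)
    -- v absolutely continuous and strictly increasing on [t₀,t₀+δ], with derivative v'
    (hv_deriv : ∀ t ∈ Icc t₀ (t₀ + δ), HasDerivWithinAt v (v' t) (Icc t₀ (t₀ + δ)) t)
    (hv_mono : StrictMonoOn v (Icc t₀ (t₀ + δ)))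
    (hv0 : v t₀ = 0)
    (hv_range : ∀ t ∈ Ioc t₀ (t₀ + δ), 0 < v t ∧ v t ≤ ε)
    -- v' absolutely continuous on [t₀,t₀+δ] with a.e. derivative v''
    (hv''_int : IntegrableOn v'' (Icc t₀ (t₀ + δ)))
    (hv'_ftc : ∀ t ∈ Icc t₀ (t₀ + δ), v' t = v' t₀ + ∫ r in t₀..t, v'' r)
    (hv'0 : v' t₀ = 0)
    (hv'_pos : ∀ t ∈ Ioc t₀ (t₀ + δ), 0 < v' t)
    -- the comparison inequality a.e.
    (hcomp : ∀ᵐ s ∂volume, s ∈ Icc t₀ (t₀ + δ) → v'' s ≤ G' (v s)) :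
    ∀ t ∈ Icc t₀ (t₀ + δ),
      (1/2) * (v' t) ^ 2 ≤ G (v t) ∧ |v' t| ≤ Real.sqrt (2 * G (v t)) := by
  intro t ht
  have ht₀ : t₀ ∈ Icc t₀ (t₀ + δ) := ⟨le_refl _, by linarith⟩
  have hsub : Icc t₀ t ⊆ Icc t₀ (t₀ + δ) := Icc_subset_Icc_right ht.2
  have hsub' : Ioc t₀ t ⊆ Icc t₀ (t₀ + δ) := fun s hs => hsub ⟨hs.1.le, hs.2⟩
  have hv'_nonneg : ∀ s ∈ Icc t₀ (t₀ + δ), 0 ≤ v' s := by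
    intro s hs
    rcases eq_or_lt_of_le hs.1 with h | h
    · rw [← h, hv'0]
    · exact (hv'_pos s ⟨h, hs.2⟩).le
  have hvt_range : v t ∈ Icc (0:ℝ) ε := by
    rcases eq_or_lt_of_le ht.1 with h | h
    · rw [← h, hv0]; exact ⟨le_refl _, hε.le⟩
    · exact ⟨(hv_range t ⟨h, ht.2⟩).1.le, (hv_range t ⟨h, ht.2⟩).2⟩
  have hv_nonneg : ∀ s ∈ Icc t₀ (t₀ + δ), 0 ≤ v s := by
    intro s hs
    rcases eq_or_lt_of_le hs.1 with h | h
    · rw [← h, hv0]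
    · exact (hv_range s ⟨h, hs.2⟩).1.le
  have hv_cont : ContinuousOn v (Icc t₀ (t₀ + δ)) :=
    fun x hx => (hv_deriv x hx).continuousWithinAt
  -- `G (v t)` as an integral over `Ioc 0 (v t)`
  have hGv : G (v t) = ∫ r in Ioc 0 (v t), G' r := by
    rw [hG_ftc (v t) hvt_range, hG0, zero_add,
      intervalIntegral.integral_of_le hvt_range.1]
  -- image of `Icc t₀ t` under `v`
  have himg : v '' Icc t₀ t = Icc 0 (v t) := by
    apply Subset.antisymm
    · rintro _ ⟨x, hx, rfl⟩
      exact ⟨hv_nonneg x (hsub hx), hv_mono.monotoneOn (hsub hx) ht hx.2⟩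
    · have := intermediate_value_Icc ht.1 (hv_cont.mono hsub)
      rwa [hv0] at this
  -- change of variables
  have hder : ∀ x ∈ Icc t₀ t, HasDerivWithinAt v (v' x) (Icc t₀ t) x :=
    fun x hx => (hv_deriv x (hsub hx)).mono hsub
  have hinj : InjOn v (Icc t₀ t) := hv_mono.injOn.mono hsub
  have hcov : ∫ r in Icc 0 (v t), G' r = ∫ x in Icc t₀ t, |v' x| * G' (v x) := by
    rw [← himg]
    simpa using integral_image_eq_integral_abs_deriv_smul measurableSet_Icc hder hinj G'
  have hGv' : G (v t) = ∫ x in Ioc t₀ t, v' x * G' (v x) := by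
    rw [hGv, ← integral_Icc_eq_integral_Ioc, hcov, integral_Icc_eq_integral_Ioc]
    refine setIntegral_congr_fun measurableSet_Ioc fun x hx => ?_
    rw [abs_of_nonneg (hv'_nonneg x (hsub' hx))]
  -- energy identity
  have hvt' : ∀ s ∈ Icc t₀ (t₀ + δ), v' s = ∫ r in Ioc t₀ s, v'' r := by
    intro s hs
    rw [hv'_ftc s hs, hv'0, zero_add, intervalIntegral.integral_of_le hs.1]
  have hE : (v' t) ^ 2 = 2 * ∫ s in Ioc t₀ t, v'' s * v' s := by
    rw [hvt' t ht, sq_integral_eq_two_mul v'' t₀ t (hv''_int.mono_set hsub')]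
    congr 1
    refine setIntegral_congr_fun measurableSet_Ioc fun s hs => ?_
    rw [hvt' s (hsub' hs)]
  -- integrabilities
  have hv'_cont : ContinuousOn v' (Icc t₀ (t₀ + δ)) := by
    have huicc : uIcc t₀ (t₀ + δ) = Icc t₀ (t₀ + δ) := uIcc_of_le (by linarith)
    have : ContinuousOn (fun x => v' t₀ + ∫ r in t₀..x, v'' r) (Icc t₀ (t₀ + δ)) := by
      refine continuousOn_const.add ?_
      have h := intervalIntegral.continuousOn_primitive_interval (f := v'') (μ := volume)
        (a := t₀) (b := t₀ + δ) (by rwa [huicc])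
      rwa [huicc] at h
    exact this.congr hv'_ftc
  have hint2 : IntegrableOn (fun s => v'' s * v' s) (Ioc t₀ t) := by
    have : IntegrableOn (fun s => v'' s * v' s) (Icc t₀ (t₀ + δ)) :=
      hv''_int.mul_continuousOn hv'_cont isCompact_Icc
    exact this.mono_set hsub'
  have hint1 : IntegrableOn (fun x => v' x * G' (v x)) (Ioc t₀ t) := by
    have h1 : IntegrableOn G' (v '' Icc t₀ t) := by
      rw [himg]; exact hG'_int.mono_set (Icc_subset_Icc_right hvt_range.2)
    have h2 : IntegrableOn (fun x => |v' x| * G' (v x)) (Icc t₀ t) := by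
      have := (integrableOn_image_iff_integrableOn_abs_deriv_smul measurableSet_Icc
        hder hinj G').mp h1
      simpa using this
    have h3 := h2.congr_fun (fun x hx => by
      show |v' x| * G' (v x) = v' x * G' (v x)
      rw [abs_of_nonneg (hv'_nonneg x (hsub hx))]) measurableSet_Icc
    exact h3.mono_set Ioc_subset_Icc_self
  -- compare
  have hnonneg : 0 ≤ ∫ s in Ioc t₀ t, (v' s * G' (v s) - v'' s * v' s) := by
    refine setIntegral_nonneg_ae measurableSet_Ioc ?_
    filter_upwards [hcomp] with s hs hmem
    have h1 := hv'_nonneg s (hsub' hmem)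
    have h2 := hs (hsub' hmem)
    nlinarith
  have hsubint : ∫ s in Ioc t₀ t, (v' s * G' (v s) - v'' s * v' s)
      = (∫ s in Ioc t₀ t, v' s * G' (v s)) - ∫ s in Ioc t₀ t, v'' s * v' s :=
    integral_sub hint1 hint2
  have key : (1/2) * (v' t) ^ 2 ≤ G (v t) := by
    rw [hGv']
    rw [hsubint] at hnonneg
    linarith
  refine ⟨key, ?_⟩
  have h2G : (v' t) ^ 2 ≤ 2 * G (v t) := by linarith
  calc |v' t| = Real.sqrt ((v' t) ^ 2) := (Real.sqrt_sq_eq_abs _).symm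
    _ ≤ Real.sqrt (2 * G (v t)) := Real.sqrt_le_sqrt h2G
end
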